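/- arXiv:1305.6756 — 6 statements merged into one kernel-verified Lean document; each statement's English description precedes it below -/
import Mathlib

section
/- Let n ≥ 3 and let l : Fin n → ℝ be positive and satisfy the polygon inequality (for every i, l i ≤ ∑_{j ≠ i} l j). Then there exists a configuration P : Fin n → ℝ² of l (dist (P i) (P (i+1 mod n)) = l i for all i) whose image is contained in an affine line of ℝ² if and only if there exists a nonempty proper subset I ⊊ Fin n with ∑_{i ∈ I} l i = ∑_{i ∉ I} l i. Consequently, a linkage is generic (no such subset I exists) if and only if it is impossible to put all its vertices on a straight line. -/
section aux
variable {n : ℕ} [NeZero n]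

private lemma cyclic_sum_shift (r : Fin n → ℝ) : ∑ i : Fin n, r (i + 1) = ∑ i : Fin n, r i :=
  Fintype.sum_equiv (Equiv.addRight 1) _ _ (fun i => rfl)

end aux

open Fin.NatCast in
theorem linkage_main_iff
    (n : ℕ) [NeZero n] (hn : 3 ≤ n) (l : Fin n → ℝ) (hl : ∀ i, 0 < l i) :
    (∃ P : Fin n → EuclideanSpace ℝ (Fin 2),
        (∀ i, dist (P i) (P (i + 1)) = l i) ∧ Collinear ℝ (Set.range P)) ↔
      ∃ I : Finset (Fin n), I.Nonempty ∧ I ≠ Finset.univ ∧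
        ∑ i ∈ I, l i = ∑ i ∈ Iᶜ, l i := by
  constructor
  · rintro ⟨P, hP, hcol⟩
    rw [collinear_iff_of_mem (Set.mem_range_self 0)] at hcol
    obtain ⟨v, hv⟩ := hcol
    choose r hr using fun i => hv (P i) ⟨i, rfl⟩
    set d : Fin n → ℝ := fun i => (r (i + 1) - r i) * ‖v‖ with hd
    have habs : ∀ i, |d i| = l i := by
      intro i
      have h2 := hP i
      rw [hr i, hr (i + 1)] at h2
      simp only [vadd_eq_add, dist_eq_norm, add_sub_add_right_eq_sub, ← sub_smul,
        norm_smul, Real.norm_eq_abs] at h2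
      rw [hd]
      simp only [abs_mul, abs_norm, ← h2, abs_sub_comm]
    have hne : ∀ i, d i ≠ 0 := by
      intro i h
      have h3 := habs i
      rw [h, abs_zero] at h3
      exact absurd h3.symm (ne_of_gt (hl i))
    have hsum : ∑ i, d i = 0 := by
      simp only [hd, sub_mul, Finset.sum_sub_distrib]
      rw [cyclic_sum_shift (fun i => r i * ‖v‖), sub_self]
    refine ⟨Finset.univ.filter (fun i => 0 < d i), ?_, ?_, ?_⟩
    · by_contra h
      rw [Finset.not_nonempty_iff_eq_empty, Finset.filter_eq_empty_iff] at h
      have : ∑ i, d i < 0 := Finset.sum_neg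
        (fun i _ => lt_of_le_of_ne (not_lt.mp (h (Finset.mem_univ i))) (hne i))
        Finset.univ_nonempty
      linarith
    · intro h
      rw [Finset.filter_eq_self] at h
      have : 0 < ∑ i, d i := Finset.sum_pos (fun i _ => h i (Finset.mem_univ i))
        Finset.univ_nonempty
      linarith
    · have h1 : ∑ i ∈ Finset.univ.filter (fun i => 0 < d i), l i
          = ∑ i ∈ Finset.univ.filter (fun i => 0 < d i), d i := by
        refine Finset.sum_congr rfl fun i hi => ?_
        rw [Finset.mem_filter] at hi
        rw [← habs i, abs_of_pos hi.2]
      have h2 : ∑ i ∈ (Finset.univ.filter (fun i => 0 < d i))ᶜ, l i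
          = ∑ i ∈ (Finset.univ.filter (fun i => 0 < d i))ᶜ, (-d i) := by
        refine Finset.sum_congr rfl fun i hi => ?_
        rw [Finset.mem_compl, Finset.mem_filter] at hi
        have hlt : d i < 0 :=
          lt_of_le_of_ne (not_lt.mp (fun h => hi ⟨Finset.mem_univ i, h⟩)) (hne i)
        rw [← habs i, abs_of_neg hlt]
      have hcompl : (Finset.univ.filter (fun i => 0 < d i))ᶜ
          = Finset.univ.filter (fun i => ¬ 0 < d i) := by
        ext i; simp
      have hsplit := Finset.sum_filter_add_sum_filter_not Finset.univ (fun i => 0 < d i) d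
      rw [hsum] at hsplit
      rw [h1, h2, Finset.sum_neg_distrib, hcompl]
      linarith
  · rintro ⟨I, hIne, hIuniv, hIsum⟩
    set ε : Fin n → ℝ := fun i => if i ∈ I then 1 else -1 with hε
    set d : Fin n → ℝ := fun i => ε i * l i with hd
    have habs : ∀ i, |d i| = l i := by
      intro i
      rw [hd, hε]
      by_cases h : i ∈ I <;> simp [h, abs_of_pos (hl i)]
    have hsum : ∑ i, d i = 0 := by
      have hs : ∑ i, d i = ∑ i ∈ I, l i - ∑ i ∈ Iᶜ, l i := by
        rw [← Finset.sum_filter_add_sum_filter_not Finset.univ (· ∈ I) d]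
        have e1 : ∑ i ∈ Finset.univ.filter (· ∈ I), d i = ∑ i ∈ I, l i := by
          rw [Finset.filter_univ_mem]
          refine Finset.sum_congr rfl fun i hi => ?_
          rw [hd, hε]; simp [hi]
        have e2 : ∑ i ∈ Finset.univ.filter (fun i => ¬ i ∈ I), d i = - ∑ i ∈ Iᶜ, l i := by
          have : Finset.univ.filter (fun i => ¬ i ∈ I) = Iᶜ := by ext i; simp
          rw [this, ← Finset.sum_neg_distrib]
          refine Finset.sum_congr rfl fun i hi => ?_
          rw [Finset.mem_compl] at hi
          rw [hd, hε]; simp [hi]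
        rw [e1, e2]; ring
      rw [hs, hIsum, sub_self]
    set g : ℕ → ℝ := fun m => ∑ i ∈ Finset.range m, d ((i : Fin n)) with hg
    have hgtot : g n = 0 := by
      rw [hg]
      simp only
      rw [← Fin.sum_univ_eq_sum_range (fun i => d ((i : Fin n))) n]
      simpa using hsum
    set v : EuclideanSpace ℝ (Fin 2) := EuclideanSpace.single 0 (1:ℝ) with hv
    set P : Fin n → EuclideanSpace ℝ (Fin 2) := fun k => g k.val • v with hP
    have hnormv : ‖v‖ = 1 := by
      rw [hv, EuclideanSpace.norm_single, norm_one]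
    have hdist : ∀ i j : Fin n, dist (P i) (P j) = |g i.val - g j.val| := by
      intro i j
      rw [hP]
      simp only [dist_eq_norm, ← sub_smul, norm_smul, Real.norm_eq_abs, hnormv, mul_one]
    refine ⟨P, fun i => ?_, ?_⟩
    · obtain ⟨k, hk⟩ := i
      have hone : ((1 : Fin n) : ℕ) = 1 := by
        rw [Fin.val_one']
        exact Nat.mod_eq_of_lt (by omega)
      have hadd : (((⟨k, hk⟩ : Fin n) + 1 : Fin n) : ℕ) = (k + 1) % n := by
        rw [Fin.add_def, hone]
      have hcast : ((k : ℕ) : Fin n) = (⟨k, hk⟩ : Fin n) := by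
        ext
        exact Fin.val_cast_of_lt hk
      have hg0 : g 0 = 0 := by rw [hg]; simp
      rcases eq_or_lt_of_le (Nat.succ_le_of_lt hk) with h | h
      · -- k + 1 = n, so i + 1 = 0
        have hi1 : (((⟨k, hk⟩ : Fin n) + 1 : Fin n) : ℕ) = 0 := by
          rw [hadd, ← h]
          exact Nat.mod_self _
        have hstep : g n = g k + d ⟨k, hk⟩ := by
          rw [hg]
          simp only
          rw [show Finset.range n = Finset.range (k + 1) by rw [← h],
            Finset.sum_range_succ, hcast]
        rw [hgtot] at hstep
        have hkey : g k = - d ⟨k, hk⟩ := by linarith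
        rw [hdist, hi1, hkey, hg0]
        simpa using habs ⟨k, hk⟩
      · have hi1 : (((⟨k, hk⟩ : Fin n) + 1 : Fin n) : ℕ) = k + 1 := by
          rw [hadd]
          exact Nat.mod_eq_of_lt h
        have hstep : g (k + 1) = g k + d ⟨k, hk⟩ := by
          rw [hg]
          simp only
          rw [Finset.sum_range_succ, hcast]
        rw [hdist, hi1, hstep]
        simpa [abs_sub_comm] using habs ⟨k, hk⟩
    · rw [collinear_iff_of_mem (Set.mem_range_self 0)]
      refine ⟨v, ?_⟩
      rintro p ⟨i, rfl⟩
      exact ⟨g i.val - g (0 : Fin n).val, by rw [hP]; simp [sub_smul]⟩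

/-- For `n ≥ 3` and positive `l : Fin n → ℝ` satisfying the polygon
inequality, there exists a configuration of the linkage all of whose vertices lie on a
straight line (i.e. the range of `P` is collinear) iff there is a nonempty proper subset
`I ⊊ Fin n` with `∑_{i ∈ I} l i = ∑_{i ∉ I} l i`.  Consequently, the linkage is generic
(no such `I` exists) iff it is impossible to put all its vertices on a straight line. -/
theorem collinear_configuration_exists_iff_splitting_subset
    (n : ℕ) [NeZero n] (hn : 3 ≤ n) (l : Fin n → ℝ) (hl : ∀ i, 0 < l i)
    (hpoly : ∀ i, l i ≤ ∑ j ∈ Finset.univ.erase i, l j) :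
    ((∃ P : Fin n → EuclideanSpace ℝ (Fin 2),
        (∀ i, dist (P i) (P (i + 1)) = l i) ∧ Collinear ℝ (Set.range P)) ↔
      ∃ I : Finset (Fin n), I.Nonempty ∧ I ≠ Finset.univ ∧
        ∑ i ∈ I, l i = ∑ i ∈ Iᶜ, l i) ∧
    ((¬ ∃ I : Finset (Fin n), I.Nonempty ∧ I ≠ Finset.univ ∧
        ∑ i ∈ I, l i = ∑ i ∈ Iᶜ, l i) ↔
      ¬ ∃ P : Fin n → EuclideanSpace ℝ (Fin 2),
        (∀ i, dist (P i) (P (i + 1)) = l i) ∧ Collinear ℝ (Set.range P)) := by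
  have h := linkage_main_iff n hn l hl
  exact ⟨h, (not_congr h).symm⟩
end

section
/- Let n ≥ 3 and let l : Fin n → ℝ be positive and generic (no nonempty proper subset I ⊊ Fin n satisfies ∑_{i ∈ I} l i = ∑_{i ∉ I} l i). Let F : (Fin n → ℝ²) → (Fin n → ℝ) be the squared edge-length map F(P) i = ‖P (i+1 mod n) − P i‖². Then at every based configuration P (P 0 = 0, F(P) i = (l i)² for all i), the Fréchet derivative of the restriction of F to the subspace { Q : Fin n → ℝ² | Q 0 = 0 } is surjective onto Fin n → ℝ; that is, (l i)²_{i} is a regular value of this restricted map. -/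
/-- The subspace `{ Q : Fin n → ℂ | Q 0 = 0 }` of based tuples of points in the plane
(the plane `ℝ²` modeled as `ℂ`), as a real submodule of `Fin n → ℂ`. -/
noncomputable def basedSubspace (n : ℕ) [NeZero n] : Submodule ℝ (Fin n → ℂ) :=
  LinearMap.ker (LinearMap.proj (R := ℝ) (φ := fun _ : Fin n => ℂ) 0)

/-- The squared edge-length map `F : (Fin n → ℂ) → (Fin n → ℝ)`,
`F(P) i = ‖P (i+1) − P i‖²` (indices cyclic). -/
noncomputable def sqEdgeLengths (n : ℕ) [NeZero n] (P : Fin n → ℂ) : Fin n → ℝ :=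
  fun i => ‖P (i + 1) - P i‖ ^ 2

noncomputable def edgeDiff (n : ℕ) [NeZero n] (i : Fin n) : basedSubspace n →L[ℝ] ℂ :=
  ((ContinuousLinearMap.proj (R := ℝ) (φ := fun _ : Fin n => ℂ) (i + 1)) -
    ContinuousLinearMap.proj i).comp (basedSubspace n).subtypeL

lemma edgeDiff_apply (n : ℕ) [NeZero n] (i : Fin n) (Q : basedSubspace n) :
    edgeDiff n i Q = Q.1 (i + 1) - Q.1 i := rfl

noncomputable def linkD (n : ℕ) [NeZero n] (P : basedSubspace n) :
    basedSubspace n →L[ℝ] (Fin n → ℝ) :=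
  ContinuousLinearMap.pi fun i => 2 • ((innerSL ℝ (edgeDiff n i P)).comp (edgeDiff n i))

lemma linkD_hasFDerivAt (n : ℕ) [NeZero n] (P : basedSubspace n) :
    HasFDerivAt (fun Q : basedSubspace n => sqEdgeLengths n Q.1) (linkD n P) P := by
  apply hasFDerivAt_pi'.2
  intro i
  exact ((edgeDiff n i).hasFDerivAt).norm_sq

lemma linkD_apply (n : ℕ) [NeZero n] (P V : basedSubspace n) (i : Fin n) :
    linkD n P V i = 2 * (inner ℝ (P.1 (i + 1) - P.1 i) (V.1 (i + 1) - V.1 i) : ℝ) := by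
  simp [linkD, edgeDiff_apply, two_smul]
  ring

lemma linkD_surjective (n : ℕ) [NeZero n] (l : Fin n → ℝ) (hl : ∀ i, 0 < l i)
    (hgen : ¬ ∃ I : Finset (Fin n), I.Nonempty ∧ I ≠ Finset.univ ∧
      ∑ i ∈ I, l i = ∑ i ∈ Iᶜ, l i)
    (P : basedSubspace n)
    (hP : ∀ i, sqEdgeLengths n P.1 i = (l i) ^ 2) :
    Function.Surjective (linkD n P) := by
  classical
  obtain ⟨m, rfl⟩ : ∃ m, n = m + 1 :=
    ⟨n - 1, (Nat.succ_pred_eq_of_pos (Nat.pos_of_ne_zero (NeZero.ne n))).symm⟩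
  set e : Fin (m + 1) → ℂ := fun i => P.1 (i + 1) - P.1 i with he
  -- edge lengths
  have hnorm : ∀ i, ‖e i‖ = l i := by
    intro i
    have h2 : ‖e i‖ ^ 2 = (l i) ^ 2 := hP i
    nlinarith [norm_nonneg (e i), (hl i).le]
  have hene : ∀ i, e i ≠ 0 := by
    intro i h
    have := hnorm i
    rw [h, norm_zero] at this
    exact (hl i).ne this
  -- sum of edges is zero
  have hsum : ∑ i, e i = 0 := by
    simp only [he]
    rw [Finset.sum_sub_distrib]
    rw [Fintype.sum_equiv (Equiv.addRight (1 : Fin (m + 1))) (fun i => P.1 (i + 1)) P.1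
      (fun i => rfl)]
    exact sub_self _
  by_contra hsurj
  have hlt : LinearMap.range ((linkD (m + 1) P) : basedSubspace (m + 1) →ₗ[ℝ] (Fin (m + 1) → ℝ))
      < ⊤ := by
    rw [lt_top_iff_ne_top]
    intro h
    exact hsurj (LinearMap.range_eq_top.1 h)
  obtain ⟨f, hf0, hfbot⟩ := Submodule.exists_dual_map_eq_bot_of_lt_top hlt inferInstance
  have hfD : ∀ V : basedSubspace (m + 1), f (linkD (m + 1) P V) = 0 := by
    intro V
    have : f (linkD (m + 1) P V) ∈ Submodule.map f
        (LinearMap.range ((linkD (m + 1) P) : basedSubspace (m + 1) →ₗ[ℝ] _)) :=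
      ⟨linkD (m + 1) P V, ⟨V, rfl⟩, rfl⟩
    rw [hfbot] at this
    simpa using this
  set lam : Fin (m + 1) → ℝ := fun i => f (fun j => if i = j then 1 else 0) with hlam
  -- the key local relation
  have key : ∀ j : Fin (m + 1), j ≠ 0 → lam (j - 1) • e (j - 1) = lam j • e j := by
    intro j hj
    have hw : ∀ w : ℂ, lam (j - 1) * (inner ℝ (e (j - 1)) w : ℝ) = lam j * inner ℝ (e j) w := by
      intro w
      set X := (Pi.single j w : Fin (m + 1) → ℂ) with hX
      have hmem : X ∈ basedSubspace (m + 1) := by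
        have : X 0 = 0 := by rw [hX]; exact Pi.single_eq_of_ne (M := fun _ => ℂ) (Ne.symm hj) w
        simpa [basedSubspace, LinearMap.mem_ker] using this
      set V : basedSubspace (m + 1) := ⟨X, hmem⟩ with hV
      have h0 := hfD V
      rw [LinearMap.pi_apply_eq_sum_univ] at h0
      have hDVi : ∀ i, linkD (m + 1) P V i =
          2 * ((inner ℝ (e i) (X (i + 1)) : ℝ) - inner ℝ (e i) (X i)) := by
        intro i
        rw [linkD_apply]
        rw [← inner_sub_right]
      simp only [hDVi, smul_eq_mul] at h0
      have hA : ∑ i : Fin (m + 1), (inner ℝ (e i) (X (i + 1)) : ℝ) * lam i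
          = (inner ℝ (e (j - 1)) w : ℝ) * lam (j - 1) := by
        rw [Finset.sum_eq_single (j - 1)]
        · rw [sub_add_cancel, hX, Pi.single_eq_same (M := fun _ => ℂ)]
        · intro i _ hi
          have : i + 1 ≠ j := by
            intro h
            exact hi (by rw [← h]; exact (add_sub_cancel_right i 1).symm)
          rw [hX, Pi.single_eq_of_ne (M := fun _ => ℂ) this, inner_zero_right, zero_mul]
        · intro h
          exact absurd (Finset.mem_univ _) h
      have hB : ∑ i : Fin (m + 1), (inner ℝ (e i) (X i) : ℝ) * lam i
          = (inner ℝ (e j) w : ℝ) * lam j := by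
        rw [Finset.sum_eq_single j]
        · rw [hX, Pi.single_eq_same (M := fun _ => ℂ)]
        · intro i _ hi
          rw [hX, Pi.single_eq_of_ne (M := fun _ => ℂ) hi, inner_zero_right, zero_mul]
        · intro h
          exact absurd (Finset.mem_univ _) h
      have hexp : ∑ i : Fin (m + 1),
          2 * ((inner ℝ (e i) (X (i + 1)) : ℝ) - inner ℝ (e i) (X i)) * lam i
          = 2 * ((inner ℝ (e (j - 1)) w : ℝ) * lam (j - 1) - (inner ℝ (e j) w : ℝ) * lam j) := by
        rw [← hA, ← hB]
        rw [← Finset.sum_sub_distrib, Finset.mul_sum]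
        congr 1
        funext i
        ring
      rw [hexp] at h0
      linear_combination h0 / 2
    have h1 := hw (lam (j - 1) • e (j - 1) - lam j • e j)
    have h2 : (inner ℝ (lam (j - 1) • e (j - 1) - lam j • e j)
        (lam (j - 1) • e (j - 1) - lam j • e j) : ℝ) = 0 := by
      rw [inner_sub_left, real_inner_smul_left, real_inner_smul_left]
      linarith
    have := inner_self_eq_zero.1 h2
    exact sub_eq_zero.1 this
  -- chain around the cycle
  have key' : ∀ i : Fin (m + 1), lam i • e i = lam 0 • e 0 := by
    intro i
    induction i using Fin.induction with
    | zero => rfl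
    | succ i ih =>
      have h1 := key (i.succ) (Fin.succ_ne_zero i)
      have h2 : i.succ - 1 = i.castSucc := by
        rw [← Fin.coeSucc_eq_succ, add_sub_cancel_right]
      rw [h2] at h1
      rw [← h1]
      exact ih
  set z := lam 0 • e 0 with hz
  by_cases hz0 : z = 0
  · -- all coefficients vanish, contradicting f ≠ 0
    have hlam0 : ∀ i, lam i = 0 := by
      intro i
      have h := key' i
      rw [hz0] at h
      rcases smul_eq_zero.1 h with h' | h'
      · exact h'
      · exact absurd h' (hene i)
    have hfi : ∀ i : Fin (m + 1), f (fun j => if i = j then 1 else 0) = 0 := by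
      intro i
      have h := hlam0 i
      rwa [hlam] at h
    apply hf0
    apply LinearMap.ext
    intro x
    rw [LinearMap.pi_apply_eq_sum_univ]
    simp [hfi]
  · -- all edges parallel to z, contradicting genericity
    have hlamne : ∀ i, lam i ≠ 0 := by
      intro i h
      exact hz0 (by rw [← key' i, h, zero_smul])
    have hei : ∀ i, e i = (lam i)⁻¹ • z := by
      intro i
      rw [← key' i, smul_smul, inv_mul_cancel₀ (hlamne i), one_smul]
    have hS : ∑ i, (lam i)⁻¹ = 0 := by
      have h1 : ∑ i, e i = (∑ i, (lam i)⁻¹) • z := by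
        rw [Finset.sum_smul]
        exact Finset.sum_congr rfl fun i _ => hei i
      rw [hsum] at h1
      exact ((smul_eq_zero.1 h1.symm).resolve_right hz0)
    have hzpos : (0 : ℝ) < ‖z‖ := norm_pos_iff.2 hz0
    have habs : ∀ i, |(lam i)⁻¹| = l i / ‖z‖ := by
      intro i
      rw [eq_div_iff hzpos.ne']
      have h1 : ‖e i‖ = |(lam i)⁻¹| * ‖z‖ := by
        rw [hei i, norm_smul, Real.norm_eq_abs]
      rw [← h1, hnorm i]
    set I : Finset (Fin (m + 1)) := Finset.univ.filter (fun i => 0 < lam i) with hI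
    have hval : ∀ i, (lam i)⁻¹ = if 0 < lam i then l i / ‖z‖ else -(l i / ‖z‖) := by
      intro i
      by_cases hp : 0 < lam i
      · rw [if_pos hp, ← habs i, abs_of_pos (inv_pos.2 hp)]
      · have hneg : lam i < 0 := lt_of_le_of_ne (not_lt.1 hp) (hlamne i)
        have hinv : (lam i)⁻¹ < 0 := inv_lt_zero.2 hneg
        rw [if_neg hp, ← habs i, abs_of_neg hinv, neg_neg]
    have hsplit : ∑ i ∈ I, (l i / ‖z‖) = ∑ i ∈ Iᶜ, (l i / ‖z‖) := by
      have h1 : ∑ i, (lam i)⁻¹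
          = ∑ i ∈ I, (l i / ‖z‖) - ∑ i ∈ Iᶜ, (l i / ‖z‖) := by
        rw [← Finset.sum_filter_add_sum_filter_not Finset.univ (fun i => 0 < lam i)]
        have hc : (Finset.univ.filter (fun i => 0 < lam i))ᶜ
            = Finset.univ.filter (fun i => ¬ 0 < lam i) := by
          rw [Finset.compl_filter]
        rw [sub_eq_add_neg, ← Finset.sum_neg_distrib]
        congr 1
        · refine Finset.sum_congr rfl fun i hi => ?_
          rw [hval i, if_pos ((Finset.mem_filter.1 hi).2)]
        · rw [← hc]
          refine Finset.sum_congr rfl fun i hi => ?_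
          rw [hc] at hi
          rw [hval i, if_neg ((Finset.mem_filter.1 hi).2)]
      rw [hS] at h1
      linarith
    have hfinal : ∑ i ∈ I, l i = ∑ i ∈ Iᶜ, l i := by
      rw [← Finset.sum_div, ← Finset.sum_div, div_eq_div_iff hzpos.ne' hzpos.ne'] at hsplit
      exact mul_right_cancel₀ hzpos.ne' hsplit
    apply hgen
    refine ⟨I, ?_, ?_, hfinal⟩
    · rw [Finset.nonempty_iff_ne_empty]
      intro h
      rw [h] at hfinal
      simp only [Finset.sum_empty, Finset.compl_empty] at hfinal
      have hpos : 0 < ∑ i : Fin (m + 1), l i :=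
        Finset.sum_pos (fun i _ => hl i) ⟨0, Finset.mem_univ 0⟩
      linarith
    · intro h
      rw [h] at hfinal
      simp only [Finset.compl_univ, Finset.sum_empty] at hfinal
      have hpos : 0 < ∑ i : Fin (m + 1), l i :=
        Finset.sum_pos (fun i _ => hl i) ⟨0, Finset.mem_univ 0⟩
      linarith


/-- Let `n ≥ 3` and let `l : Fin n → ℝ` be positive and generic (no
nonempty proper subset `I ⊊ Fin n` satisfies `∑_{i ∈ I} l i = ∑_{i ∉ I} l i`).  Then at
every based configuration `P` (`P 0 = 0` and `F(P) i = (l i)²` for all `i`) the Fréchet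
derivative of the restriction of the squared edge-length map `F` to the subspace
`{ Q | Q 0 = 0 }` is surjective onto `Fin n → ℝ`; i.e. `(l i)²` is a regular value of
this restricted map. -/
theorem generic_linkage_sq_edge_lengths_fderiv_surjective
    (n : ℕ) [NeZero n] (hn : 3 ≤ n) (l : Fin n → ℝ) (hl : ∀ i, 0 < l i)
    (hgen : ¬ ∃ I : Finset (Fin n), I.Nonempty ∧ I ≠ Finset.univ ∧
      ∑ i ∈ I, l i = ∑ i ∈ Iᶜ, l i)
    (P : basedSubspace n)
    (hP : ∀ i, sqEdgeLengths n P.1 i = (l i) ^ 2) :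
    Function.Surjective
      (fderiv ℝ (fun Q : basedSubspace n => sqEdgeLengths n Q.1) P) := by
  rw [(linkD_hasFDerivAt n P).fderiv]
  exact linkD_surjective n l hl hgen P hP
end

section
/- Let l : Fin 5 → ℝ be positive, satisfy the polygon inequality, and be generic. Then the moduli space M(l), realized as the slice S(l) = { P : Fin 5 → ℝ² | P 0 = 0, P 1 = (l 0, 0), dist (P i) (P (i+1 mod 5)) = l i for all i }, is a nonempty compact topological 2-manifold (a compact charted space over EuclideanSpace ℝ (Fin 2)). -/
noncomputable section PentagonAux

open Module

namespace Pentagon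

/-! ### Planar linear algebra helpers -/

/-- Real inner product on `ℂ`. -/
def rin (u w : ℂ) : ℝ := u.re * w.re + u.im * w.im

/-- Determinant of two planar vectors. -/
def det2 (u w : ℂ) : ℝ := u.re * w.im - u.im * w.re

lemma rin_sub (u v w : ℂ) : rin u (v - w) = rin u v - rin u w := by
  simp [rin]; ring

lemma rin_smul (u : ℂ) (k : ℝ) (w : ℂ) : rin u (k • w) = k * rin u w := by
  simp [rin, Complex.real_smul, Complex.mul_re, Complex.mul_im]; ring

lemma rin_self_pos {u : ℂ} (hu : u ≠ 0) : 0 < rin u u := by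
  have := Complex.normSq_pos.mpr hu
  simpa [rin, Complex.normSq_apply] using this

lemma solve_one {u : ℂ} (hu : u ≠ 0) (a : ℝ) : ∃ v : ℂ, rin u v = a :=
  ⟨(a / rin u u) • u, by rw [rin_smul]; field_simp [(rin_self_pos hu).ne']⟩

lemma solve_two {u w : ℂ} (h : det2 u w ≠ 0) (a b : ℝ) :
    ∃ v : ℂ, rin u v = a ∧ rin w v = b := by
  refine ⟨⟨(a * w.im - b * u.im) / det2 u w, (u.re * b - w.re * a) / det2 u w⟩, ?_, ?_⟩ <;>
  · simp only [rin] at *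
    field_simp
    simp only [det2]
    ring

lemma det2_trans {a b c : ℂ} (hb : b ≠ 0) (h1 : det2 a b = 0) (h2 : det2 b c = 0) :
    det2 a c = 0 := by
  have hb2 : rin b b ≠ 0 := (rin_self_pos hb).ne'
  have key : det2 a c * rin b b = det2 a b * rin b c + rin a b * det2 b c := by
    simp only [det2, rin]; ring
  rw [h1, h2] at key
  simp only [zero_mul, mul_zero, add_zero] at key
  exact (mul_eq_zero.mp key).resolve_right hb2

/-- Solving the chain of four linear conditions, given that some consecutive pair of
edges is linearly independent. -/
lemma solve_chain {e1 e2 e3 e4 : ℂ} (h1 : e1 ≠ 0) (h2 : e2 ≠ 0) (h3 : e3 ≠ 0) (h4 : e4 ≠ 0)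
    (hnd : det2 e1 e2 ≠ 0 ∨ det2 e2 e3 ≠ 0 ∨ det2 e3 e4 ≠ 0) (s0 s1 s2 s3 : ℝ) :
    ∃ v2 v3 v4 : ℂ, rin e1 v2 = s0 ∧ rin e2 v3 - rin e2 v2 = s1 ∧
      rin e3 v4 - rin e3 v3 = s2 ∧ rin e4 v4 = s3 := by
  rcases hnd with hnd | hnd | hnd
  · -- e1, e2 independent: fix v4, then v3, then solve pair for v2
    obtain ⟨v4, hv4⟩ := solve_one h4 s3
    refine ⟨?_, v4 - (s2 / rin e3 e3) • e3, v4, ?_, ?_, ?_, hv4⟩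
    case refine_1 => exact (solve_two hnd s0 (rin e2 (v4 - (s2 / rin e3 e3) • e3) - s1)).choose
    all_goals
      have hp := (solve_two hnd s0 (rin e2 (v4 - (s2 / rin e3 e3) • e3) - s1)).choose_spec
    · exact hp.1
    · rw [hp.2]; ring
    · rw [rin_sub, rin_smul]; field_simp [(rin_self_pos h3).ne']; ring
  · -- e2, e3 independent: fix v2 and v4, solve pair for v3
    obtain ⟨v2, hv2⟩ := solve_one h1 s0
    obtain ⟨v4, hv4⟩ := solve_one h4 s3
    obtain ⟨v3, hv3, hv3'⟩ := solve_two hnd (s1 + rin e2 v2) (rin e3 v4 - s2)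
    exact ⟨v2, v3, v4, hv2, by rw [hv3]; ring, by rw [hv3']; ring, hv4⟩
  · -- e3, e4 independent: fix v2, then v3, solve pair for v4
    obtain ⟨v2, hv2⟩ := solve_one h1 s0
    obtain ⟨v4, hv4, hv4'⟩ := solve_two hnd (s2 + rin e3 (v2 + (s1 / rin e2 e2) • e2)) s3
    refine ⟨v2, v2 + (s1 / rin e2 e2) • e2, v4, hv2, ?_, by rw [hv4]; ring, hv4'⟩
    have : rin e2 (v2 + (s1 / rin e2 e2) • e2) = rin e2 v2 + (s1 / rin e2 e2) * rin e2 e2 := by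
      have := rin_sub e2 (v2 + (s1 / rin e2 e2) • e2) ((s1 / rin e2 e2) • e2)
      simp only [add_sub_cancel_right] at this
      rw [rin_smul] at this
      linarith
    rw [this]; field_simp [(rin_self_pos h2).ne']; ring

/-! ### Two circles intersect -/

/-- Given two points at distance `d` and radii `r`, `s` satisfying the triangle
inequalities, the two circles intersect. -/
lemma exists_dist_dist {A B : ℂ} {d r s : ℝ} (hd : dist A B = d) (hr : 0 ≤ r) (hs : 0 ≤ s)
    (h1 : d ≤ r + s) (h2 : r ≤ d + s) (h3 : s ≤ d + r) :
    ∃ C : ℂ, dist A C = r ∧ dist C B = s := by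
  have hd0 : 0 ≤ d := hd ▸ dist_nonneg
  rcases eq_or_lt_of_le hd0 with hd0' | hd0'
  · -- degenerate case : A = B, r = s
    have hAB : A = B := by rw [← dist_eq_zero, hd, ← hd0']
    have hrs : r = s := le_antisymm (by linarith) (by linarith)
    refine ⟨A + r, ?_, ?_⟩
    · rw [dist_comm, dist_eq_norm, add_sub_cancel_left]
      simpa using hr
    · rw [← hAB, dist_eq_norm, add_sub_cancel_left]
      rw [hrs] at hr ⊢
      simpa using hs
  · -- nondegenerate case
    set u : ℝ := (d ^ 2 + r ^ 2 - s ^ 2) / (2 * d) with hu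
    have hdne : d ≠ 0 := hd0'.ne'
    have hprod : 0 ≤ (d + r + s) * (d + r - s) * (s + d - r) * (s - d + r) := by
      have := mul_nonneg (mul_nonneg (mul_nonneg (by linarith : (0:ℝ) ≤ d + r + s)
        (by linarith : (0:ℝ) ≤ d + r - s)) (by linarith : (0:ℝ) ≤ s + d - r))
        (by linarith : (0:ℝ) ≤ s - d + r)
      linarith
    have hru : 0 ≤ r ^ 2 - u ^ 2 := by
      have h4 : (2 * d) ^ 2 * (r ^ 2 - u ^ 2) =
          (d + r + s) * (d + r - s) * (s + d - r) * (s - d + r) := by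
        rw [hu]
        field_simp
        ring
      by_contra hneg
      push_neg at hneg
      have h5 : (2 * d) ^ 2 * (r ^ 2 - u ^ 2) < 0 :=
        mul_neg_of_pos_of_neg (by positivity) hneg
      linarith
    set v : ℝ := Real.sqrt (r ^ 2 - u ^ 2) with hv
    have hv2 : v ^ 2 = r ^ 2 - u ^ 2 := Real.sq_sqrt hru
    set γ : ℂ := ⟨u / d, v / d⟩ with hγ
    refine ⟨A + γ * (B - A), ?_, ?_⟩
    · have hnormsq : Complex.normSq (A + γ * (B - A) - A) = r ^ 2 := by
        rw [add_sub_cancel_left, Complex.normSq_mul]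
        have hBA : Complex.normSq (B - A) = d ^ 2 := by
          have : ‖B - A‖ = d := by
            rw [← Complex.dist_eq, dist_comm, hd]
          rw [← Complex.sq_norm, this]
        rw [hBA]
        have : Complex.normSq γ = (u / d) ^ 2 + (v / d) ^ 2 := by
          simp [hγ, Complex.normSq_apply]; ring
        rw [this]
        field_simp
        linarith [hv2]
      rw [dist_eq_norm, norm_sub_rev, Complex.norm_def,
        hnormsq, Real.sqrt_sq hr]
    · have hnormsq : Complex.normSq (A + γ * (B - A) - B) = s ^ 2 := by
        have : A + γ * (B - A) - B = (γ - 1) * (B - A) := by ring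
        rw [this, Complex.normSq_mul]
        have hBA : Complex.normSq (B - A) = d ^ 2 := by
          have : ‖B - A‖ = d := by
            rw [← Complex.dist_eq, dist_comm, hd]
          rw [← Complex.sq_norm, this]
        rw [hBA]
        have : Complex.normSq (γ - 1) = (u / d - 1) ^ 2 + (v / d) ^ 2 := by
          simp [hγ, Complex.normSq_apply]; ring
        rw [this]
        have hueq : u * (2 * d) = d ^ 2 + r ^ 2 - s ^ 2 := by
          rw [hu]; field_simp
        field_simp
        nlinarith [hv2, hueq]
      rw [dist_eq_norm, Complex.norm_def, hnormsq, Real.sqrt_sq hs]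

/-! ### The constraint map and its derivative -/

/-- The constraint map on configurations. -/
def pmap : (Fin 5 → ℂ) → ℂ × ℂ × (Fin 4 → ℝ) := fun P =>
  (P 0, P 1, fun j => Complex.normSq (P (j.succ + 1) - P j.succ))

/-- The target value of the constraint map. -/
def pc (l : Fin 5 → ℝ) : ℂ × ℂ × (Fin 4 → ℝ) := (0, (l 0 : ℂ), fun j => l j.succ ^ 2)

/-- The linear functional `w ↦ 2⟪z, w⟫`. -/
def lz (z : ℂ) : ℂ →L[ℝ] ℝ := (2 * z.re) • Complex.reCLM + (2 * z.im) • Complex.imCLM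

lemma lz_apply (z w : ℂ) : lz z w = 2 * rin z w := by
  simp [lz, rin]; ring

lemma hasStrict_normSq (z : ℂ) : HasStrictFDerivAt Complex.normSq (lz z) z := by
  have h := ((Complex.reCLM.hasStrictFDerivAt (x := z)).mul
      (Complex.reCLM.hasStrictFDerivAt (x := z))).add
    ((Complex.imCLM.hasStrictFDerivAt (x := z)).mul
      (Complex.imCLM.hasStrictFDerivAt (x := z)))
  have hfun : ⇑Complex.normSq =
      fun w : ℂ => Complex.reCLM w * Complex.reCLM w + Complex.imCLM w * Complex.imCLM w := by
    funext w
    simp [Complex.normSq_apply]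
  have hder : lz z = (Complex.reCLM z • Complex.reCLM + Complex.reCLM z • Complex.reCLM) +
      (Complex.imCLM z • Complex.imCLM + Complex.imCLM z • Complex.imCLM) := by
    ext w
    simp [lz]
    ring
  rw [hfun, hder]
  exact h

/-- The difference-of-coordinates continuous linear map. -/
def Amap (j : Fin 4) : (Fin 5 → ℂ) →L[ℝ] ℂ :=
  (ContinuousLinearMap.proj (j.succ + 1) : (Fin 5 → ℂ) →L[ℝ] ℂ) -
    (ContinuousLinearMap.proj j.succ : (Fin 5 → ℂ) →L[ℝ] ℂ)

lemma Amap_apply (j : Fin 4) (P : Fin 5 → ℂ) : Amap j P = P (j.succ + 1) - P j.succ := by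
  simp [Amap]

/-- The derivative of the constraint map. -/
def Tmap (P : Fin 5 → ℂ) : (Fin 5 → ℂ) →L[ℝ] ℂ × ℂ × (Fin 4 → ℝ) :=
  (ContinuousLinearMap.proj 0 : (Fin 5 → ℂ) →L[ℝ] ℂ).prod
    ((ContinuousLinearMap.proj 1 : (Fin 5 → ℂ) →L[ℝ] ℂ).prod
      (ContinuousLinearMap.pi fun j => (lz (P (j.succ + 1) - P j.succ)).comp (Amap j)))

lemma hasStrict_pmap (P : Fin 5 → ℂ) : HasStrictFDerivAt pmap (Tmap P) P := by
  refine HasStrictFDerivAt.prodMk ?_ (HasStrictFDerivAt.prodMk ?_ ?_)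
  · exact (ContinuousLinearMap.proj 0 : (Fin 5 → ℂ) →L[ℝ] ℂ).hasStrictFDerivAt
  · exact (ContinuousLinearMap.proj 1 : (Fin 5 → ℂ) →L[ℝ] ℂ).hasStrictFDerivAt
  · refine hasStrictFDerivAt_pi.mpr fun j => ?_
    exact (hasStrict_normSq (P (j.succ + 1) - P j.succ)).comp P (Amap j).hasStrictFDerivAt

/-! ### No configuration is collinear (genericity) -/

lemma not_all_collinear (l : Fin 5 → ℝ) (hl : ∀ i, 0 < l i)
    (hgen : ¬ ∃ I : Finset (Fin 5), I.Nonempty ∧ I ≠ Finset.univ ∧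
      ∑ i ∈ I, l i = ∑ i ∈ Iᶜ, l i)
    {P : Fin 5 → ℂ} (hP0 : P 0 = 0) (hP1 : P 1 = (l 0 : ℂ))
    (hd : ∀ i, dist (P i) (P (i + 1)) = l i) :
    det2 (P 2 - P 1) (P 3 - P 2) ≠ 0 ∨ det2 (P 3 - P 2) (P 4 - P 3) ≠ 0 ∨
      det2 (P 4 - P 3) (P 0 - P 4) ≠ 0 := by
  by_contra hcon
  push_neg at hcon
  obtain ⟨hc1, hc2, hc3⟩ := hcon
  set e : Fin 5 → ℂ := fun i => P (i + 1) - P i with he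
  have hnorm : ∀ i, ‖e i‖ = l i := by
    intro i
    rw [he]
    simp only
    rw [← dist_eq_norm, dist_comm]
    exact hd i
  have hne : ∀ i, e i ≠ 0 := fun i h => by
    have := hnorm i
    rw [h, norm_zero] at this
    exact absurd this.symm (hl i).ne'
  have he0 : e 0 = (l 0 : ℂ) := by
    simp only [he]
    rw [show (0 + 1 : Fin 5) = 1 by decide, hP0, hP1, sub_zero]
  have he41 : (4 + 1 : Fin 5) = 0 := by decide
  -- identify the edges appearing in the hypotheses
  have hE1 : e 1 = P 2 - P 1 := by simp only [he]; norm_num; rfl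
  have hE2 : e 2 = P 3 - P 2 := by simp only [he]; norm_num; rfl
  have hE3 : e 3 = P 4 - P 3 := by simp only [he]; norm_num; rfl
  have hE4 : e 4 = P 0 - P 4 := by simp only [he]; rw [he41]
  rw [← hE1, ← hE2] at hc1
  rw [← hE2, ← hE3] at hc2
  rw [← hE3, ← hE4] at hc3
  -- transitivity of parallelism
  have hc13 : det2 (e 1) (e 3) = 0 := det2_trans (hne 2) hc1 hc2
  have hc14 : det2 (e 1) (e 4) = 0 := det2_trans (hne 3) hc13 hc3
  -- the edges sum to zero
  have hsum : e 0 + e 1 + e 2 + e 3 + e 4 = 0 := by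
    simp only [he]
    rw [show (0 + 1 : Fin 5) = 1 by decide, show (1 + 1 : Fin 5) = 2 by decide,
      show (2 + 1 : Fin 5) = 3 by decide, show (3 + 1 : Fin 5) = 4 by decide, he41]
    ring
  -- hence e 1 is horizontal
  have him1 : (e 1).im = 0 := by
    have h10 : det2 (e 1) (e 0) = -((e 1).im * l 0) := by
      rw [he0]
      simp [det2]
    have hsum' : e 0 = -(e 1 + e 2 + e 3 + e 4) := by
      have := hsum
      linear_combination this - (e 1 + e 2 + e 3 + e 4 + e 0) + (e 0 + e 1 + e 2 + e 3 + e 4)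
    have hexp : det2 (e 1) (e 0) = -(det2 (e 1) (e 1) + det2 (e 1) (e 2) +
        det2 (e 1) (e 3) + det2 (e 1) (e 4)) := by
      rw [hsum']
      simp only [det2, Complex.neg_re, Complex.neg_im, Complex.add_re, Complex.add_im]
      ring
    have hself : det2 (e 1) (e 1) = 0 := by simp [det2]; ring
    rw [hself, hc1, hc13, hc14] at hexp
    rw [hexp] at h10
    have h0 := (hl 0).ne'
    have : (e 1).im * l 0 = 0 := by linarith
    rcases mul_eq_zero.mp this with h | h
    · exact h
    · exact absurd h h0
  -- all other edges are horizontal too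
  have hre1 : (e 1).re ≠ 0 := by
    intro h
    exact hne 1 (Complex.ext h him1)
  have himall : ∀ i, (e i).im = 0 := by
    have him : ∀ i, det2 (e 1) (e i) = 0 → (e i).im = 0 := by
      intro i hdet
      simp only [det2, him1, zero_mul, sub_zero] at hdet
      exact (mul_eq_zero.mp hdet).resolve_left hre1
    intro i
    fin_cases i
    · show (e 0).im = 0
      rw [he0]; simp
    · exact him1
    · exact him 2 hc1
    · exact him 3 hc13
    · exact him 4 hc14
  -- the real parts are signed lengths
  set s : Fin 5 → ℝ := fun i => (e i).re with hs
  have habs : ∀ i, |s i| = l i := by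
    intro i
    have : ‖e i‖ = |s i| := by
      have : e i = ((s i : ℝ) : ℂ) := Complex.ext rfl (himall i)
      rw [this, Complex.norm_real, Real.norm_eq_abs]
    rw [← this, hnorm]
  have hssum : ∑ i, s i = 0 := by
    have : (∑ i, e i).re = 0 := by
      rw [show ∑ i, e i = e 0 + e 1 + e 2 + e 3 + e 4 from by
        rw [Fin.sum_univ_five], hsum]
      simp
    rw [← this, Complex.re_sum]
  -- construct the forbidden subset
  classical
  set I : Finset (Fin 5) := Finset.univ.filter (fun i => s i < 0) with hI
  have hsval : ∀ i, s i = l i ∨ s i = -l i := by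
    intro i
    rcases abs_cases (s i) with ⟨h, _⟩ | ⟨h, _⟩
    · left; rw [← habs i, h]
    · right; rw [← habs i, h]; ring
  have hIs : ∀ i ∈ I, s i = -l i := by
    intro i hi
    rw [hI, Finset.mem_filter] at hi
    rcases hsval i with h | h
    · exfalso; have := hl i; linarith [hi.2, h ▸ hi.2]
    · exact h
  have hIcs : ∀ i ∈ Iᶜ, s i = l i := by
    intro i hi
    rw [Finset.mem_compl, hI, Finset.mem_filter] at hi
    push_neg at hi
    have hnonneg : 0 ≤ s i := hi (Finset.mem_univ i)
    rcases hsval i with h | h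
    · exact h
    · exfalso
      have := hl i
      rw [h] at hnonneg
      linarith
  refine hgen ⟨I, ?_, ?_, ?_⟩
  · -- nonempty
    by_contra hemp
    rw [Finset.not_nonempty_iff_eq_empty] at hemp
    have : ∀ i, s i = l i := by
      intro i
      apply hIcs
      rw [Finset.mem_compl, hemp]
      exact Finset.notMem_empty i
    rw [Finset.sum_congr rfl fun i _ => this i] at hssum
    have : (0 : ℝ) < ∑ i, l i := Finset.sum_pos (fun i _ => hl i) ⟨0, Finset.mem_univ 0⟩
    linarith
  · -- proper
    intro huniv
    have : ∀ i, s i = -l i := fun i => hIs i (huniv ▸ Finset.mem_univ i)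
    rw [Finset.sum_congr rfl fun i _ => this i] at hssum
    have : (0 : ℝ) < ∑ i, l i := Finset.sum_pos (fun i _ => hl i) ⟨0, Finset.mem_univ 0⟩
    rw [Finset.sum_neg_distrib] at hssum
    linarith
  · -- equal sums
    have hsplit : ∑ i ∈ I, s i + ∑ i ∈ Iᶜ, s i = 0 := by
      rw [Finset.sum_add_sum_compl]
      exact hssum
    rw [Finset.sum_congr rfl hIs, Finset.sum_congr rfl hIcs, Finset.sum_neg_distrib] at hsplit
    linarith

/-! ### Surjectivity of the derivative -/

lemma Tmap_surj (l : Fin 5 → ℝ) (hl : ∀ i, 0 < l i)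
    (hgen : ¬ ∃ I : Finset (Fin 5), I.Nonempty ∧ I ≠ Finset.univ ∧
      ∑ i ∈ I, l i = ∑ i ∈ Iᶜ, l i)
    {P : Fin 5 → ℂ} (hP0 : P 0 = 0) (hP1 : P 1 = (l 0 : ℂ))
    (hd : ∀ i, dist (P i) (P (i + 1)) = l i) :
    (Tmap P).range = ⊤ := by
  rw [LinearMap.range_eq_top]
  rintro ⟨a, b, t⟩
  have hedge : ∀ i : Fin 5, P (i + 1) - P i ≠ 0 := by
    intro i h
    have := hd i
    rw [dist_eq_norm, norm_sub_rev, h, norm_zero] at this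
    exact absurd this.symm (hl i).ne'
  have h1 : (P 2 - P 1 : ℂ) ≠ 0 := by
    have := hedge 1; rwa [show (1 + 1 : Fin 5) = 2 by decide] at this
  have h2 : (P 3 - P 2 : ℂ) ≠ 0 := by
    have := hedge 2; rwa [show (2 + 1 : Fin 5) = 3 by decide] at this
  have h3 : (P 4 - P 3 : ℂ) ≠ 0 := by
    have := hedge 3; rwa [show (3 + 1 : Fin 5) = 4 by decide] at this
  have h4 : (P 0 - P 4 : ℂ) ≠ 0 := by
    have := hedge 4; rwa [show (4 + 1 : Fin 5) = 0 by decide] at this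
  have hnd := not_all_collinear l hl hgen hP0 hP1 hd
  obtain ⟨v2, v3, v4, hv1, hv2, hv3, hv4⟩ := solve_chain h1 h2 h3 h4 hnd
    (t 0 / 2 + rin (P 2 - P 1) b) (t 1 / 2) (t 2 / 2) (rin (P 0 - P 4) a - t 3 / 2)
  refine ⟨![a, b, v2, v3, v4], ?_⟩
  have hv : ∀ w : Fin 5 → ℂ, Tmap P w =
      (w 0, w 1, fun j => lz (P (j.succ + 1) - P j.succ) (w (j.succ + 1) - w j.succ)) :=
    fun w => rfl
  rw [ContinuousLinearMap.coe_coe, hv]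
  refine Prod.ext ?_ (Prod.ext ?_ ?_)
  · simp
  · simp
  · funext j
    fin_cases j <;>
      simp only [show ((0 : Fin 4).succ : Fin 5) = 1 from rfl,
        show ((1 : Fin 4).succ : Fin 5) = 2 from rfl,
        show ((2 : Fin 4).succ : Fin 5) = 3 from rfl,
        show ((3 : Fin 4).succ : Fin 5) = 4 from rfl,
        show (1 + 1 : Fin 5) = 2 by decide, show (2 + 1 : Fin 5) = 3 by decide,
        show (3 + 1 : Fin 5) = 4 by decide, show (4 + 1 : Fin 5) = 0 by decide,
        Matrix.cons_val_zero, Matrix.cons_val_one, Matrix.head_cons] <;>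
      rw [lz_apply, rin_sub]
    · -- j = 0 : 2 * (rin e1 v2 - rin e1 b) = t 0
      show 2 * (rin (P 2 - P 1) (![a, b, v2, v3, v4] 2) - rin (P 2 - P 1) b) = t 0
      have : (![a, b, v2, v3, v4] : Fin 5 → ℂ) 2 = v2 := rfl
      rw [this, hv1]; ring
    · show 2 * (rin (P 3 - P 2) (![a, b, v2, v3, v4] 3) -
        rin (P 3 - P 2) (![a, b, v2, v3, v4] 2)) = t 1
      have e3 : (![a, b, v2, v3, v4] : Fin 5 → ℂ) 3 = v3 := rfl
      have e2 : (![a, b, v2, v3, v4] : Fin 5 → ℂ) 2 = v2 := rfl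
      rw [e3, e2]; linarith [hv2]
    · show 2 * (rin (P 4 - P 3) (![a, b, v2, v3, v4] 4) -
        rin (P 4 - P 3) (![a, b, v2, v3, v4] 3)) = t 2
      have e4 : (![a, b, v2, v3, v4] : Fin 5 → ℂ) 4 = v4 := rfl
      have e3 : (![a, b, v2, v3, v4] : Fin 5 → ℂ) 3 = v3 := rfl
      rw [e4, e3]; linarith [hv3]
    · show 2 * (rin (P 0 - P 4) a - rin (P 0 - P 4) (![a, b, v2, v3, v4] 4)) = t 3
      have e4 : (![a, b, v2, v3, v4] : Fin 5 → ℂ) 4 = v4 := rfl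
      rw [e4, hv4]; ring

/-! ### A chart near a point of a level set of a submersion -/

theorem exists_chart {E : Type*} [NormedAddCommGroup E] [NormedSpace ℝ E]
    [FiniteDimensional ℝ E]
    {G : Type*} [NormedAddCommGroup G] [NormedSpace ℝ G] [FiniteDimensional ℝ G]
    {f : E → G} {c : G} {f' : E →L[ℝ] G} (x : {p : E // f p = c})
    (hf : HasStrictFDerivAt f f' x.1) (hsurj : f'.range = ⊤)
    (hdim : finrank ℝ E = finrank ℝ G + 2) :
    ∃ e : OpenPartialHomeomorph {p : E // f p = c} (EuclideanSpace ℝ (Fin 2)), x ∈ e.source := by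
  classical
  haveI : CompleteSpace E := FiniteDimensional.complete ℝ E
  set φ := hf.implicitToOpenPartialHomeomorph f f' hsurj with hφdef
  have hker2 : finrank ℝ f'.ker = 2 := by
    have h := LinearMap.finrank_range_add_finrank_ker (f' : E →ₗ[ℝ] G)
    have hr : LinearMap.range (f' : E →ₗ[ℝ] G) = ⊤ := by
      rw [← hsurj]
    have hk : LinearMap.ker (f' : E →ₗ[ℝ] G) = f'.ker := rfl
    rw [hr, hk, finrank_top, hdim] at h
    omega
  let ι : f'.ker ≃L[ℝ] EuclideanSpace ℝ (Fin 2) :=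
    LinearEquiv.toContinuousLinearEquiv
      (LinearEquiv.ofFinrankEq _ _ (by rw [hker2, finrank_euclideanSpace_fin]))
  have hfst : ∀ y : E, (φ y).1 = f y := fun y => rfl
  have hsymm_f : ∀ z ∈ φ.target, f (φ.symm z) = z.1 := by
    intro z hz
    have h1 : (φ (φ.symm z)).1 = z.1 := by rw [φ.right_inv hz]
    rw [← hfst (φ.symm z), h1]
  have hc : ∀ p : {p : E // f p = c}, p.1 ∈ φ.source → (c, (φ p.1).2) = φ p.1 := by
    intro p _
    refine Prod.ext ?_ rfl
    rw [hfst p.1, p.2]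
  have hinvc : ∀ z : EuclideanSpace ℝ (Fin 2), (c, ι.symm z) ∈ φ.target →
      f (φ.symm (c, ι.symm z)) = c := by
    intro z hz
    exact hsymm_f _ hz
  refine ⟨⟨⟨⟨fun p => ι (φ p.1).2,
    fun z => if h : f (φ.symm (c, ι.symm z)) = c then ⟨φ.symm (c, ι.symm z), h⟩ else x,
    {p | p.1 ∈ φ.source}, {z | (c, ι.symm z) ∈ φ.target}, ?_, ?_, ?_, ?_⟩, ?_, ?_⟩, ?_, ?_⟩, ?_⟩
  · -- map_source'
    intro p hp
    show (c, ι.symm (ι (φ p.1).2)) ∈ φ.target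
    rw [ContinuousLinearEquiv.symm_apply_apply, hc p hp]
    exact φ.map_source hp
  · -- map_target'
    intro z hz
    have h1 := hinvc z hz
    show (if h : f (φ.symm (c, ι.symm z)) = c then
        (⟨φ.symm (c, ι.symm z), h⟩ : {p : E // f p = c}) else x).1 ∈ φ.source
    rw [dif_pos h1]
    exact φ.map_target hz
  · -- left_inv'
    intro p hp
    simp only [ContinuousLinearEquiv.symm_apply_apply, hc p hp, φ.left_inv hp]
    rw [dif_pos p.2]
  · -- right_inv'
    intro z hz
    have h1 := hinvc z hz
    rw [dif_pos h1]
    show ι (φ (φ.symm (c, ι.symm z))).2 = z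
    rw [φ.right_inv hz]
    exact ι.apply_symm_apply z
  · -- continuousOn_toFun
    exact (ι.continuous.comp continuous_snd).comp_continuousOn
      (φ.continuousOn.comp continuous_subtype_val.continuousOn fun p hp => hp)
  · -- continuousOn_invFun
    rw [Topology.IsEmbedding.subtypeVal.toIsInducing.continuousOn_iff]
    refine ContinuousOn.congr
      (φ.continuousOn_symm.comp ((continuous_const.prodMk ι.symm.continuous).continuousOn)
        fun z hz => hz) ?_
    intro z hz
    have h1 := hinvc z hz
    simp only [Function.comp_apply, dif_pos h1]
  · -- open_source
    exact φ.open_source.preimage continuous_subtype_val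
  · -- open_target
    exact φ.open_target.preimage (continuous_const.prodMk ι.symm.continuous)
  · -- x ∈ source
    exact hf.mem_implicitToOpenPartialHomeomorph_source hsurj

/-- Build a charted space structure from pointwise charts. -/
def chartedSpaceOfCharts {H M : Type*} [TopologicalSpace H] [TopologicalSpace M]
    (h : ∀ x : M, ∃ e : OpenPartialHomeomorph M H, x ∈ e.source) : ChartedSpace H M where
  atlas := Set.range fun x => (h x).choose
  chartAt x := (h x).choose
  mem_chart_source x := (h x).choose_spec
  chart_mem_atlas x := Set.mem_range_self x

end Pentagon

end PentagonAux

open Pentagon in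
/-- Let `l : Fin 5 → ℝ` be positive, satisfy the polygon inequality, and
be generic.  Then the moduli space `M(l)`, realized as the slice
`S(l) = { P : Fin 5 → ℂ | P 0 = 0, P 1 = (l 0, 0), dist (P i) (P (i+1)) = l i for all i }`
(the plane `ℝ²` modeled as `ℂ`, indices cyclic mod 5), is a nonempty compact topological
2-manifold: it is nonempty, compact, and carries a charted-space structure over
`EuclideanSpace ℝ (Fin 2)`. -/
theorem generic_pentagon_moduli_space_is_compact_surface
    (l : Fin 5 → ℝ) (hl : ∀ i, 0 < l i)
    (hpoly : ∀ i, l i ≤ ∑ j ∈ Finset.univ.erase i, l j)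
    (hgen : ¬ ∃ I : Finset (Fin 5), I.Nonempty ∧ I ≠ Finset.univ ∧
      ∑ i ∈ I, l i = ∑ i ∈ Iᶜ, l i) :
    Nonempty {P : Fin 5 → ℂ // P 0 = 0 ∧ P 1 = (l 0 : ℂ) ∧
        ∀ i, dist (P i) (P (i + 1)) = l i} ∧
    CompactSpace {P : Fin 5 → ℂ // P 0 = 0 ∧ P 1 = (l 0 : ℂ) ∧
        ∀ i, dist (P i) (P (i + 1)) = l i} ∧
    Nonempty
      (ChartedSpace (EuclideanSpace ℝ (Fin 2))
        {P : Fin 5 → ℂ // P 0 = 0 ∧ P 1 = (l 0 : ℂ) ∧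
          ∀ i, dist (P i) (P (i + 1)) = l i}) := by
  classical
  -- explicit polygon inequalities
  have htot : ∀ i, l i ≤ (∑ j, l j) - l i := by
    intro i
    have h := hpoly i
    rwa [Finset.sum_erase_eq_sub (Finset.mem_univ i)] at h
  have hsum5 : ∑ j, l j = l 0 + l 1 + l 2 + l 3 + l 4 := Fin.sum_univ_five l
  have hp0 := htot 0
  have hp1 := htot 1
  have hp2 := htot 2
  have hp3 := htot 3
  have hp4 := htot 4
  rw [hsum5] at hp0 hp1 hp2 hp3 hp4
  -- choice of diagonals
  set x : ℝ := min (l 1 + l 2) (l 3 + l 4 + l 0) with hx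
  set y : ℝ := min (l 3 + l 4) (x + l 0) with hy
  have hxcases := min_cases (l 1 + l 2) (l 3 + l 4 + l 0)
  have hycases := min_cases (l 3 + l 4) (x + l 0)
  rw [← hx] at hxcases
  rw [← hy] at hycases
  have hx0 : 0 ≤ x := by
    rcases hxcases with ⟨h, _⟩ | ⟨h, _⟩ <;> rw [h] <;>
      linarith [hl 0, hl 1, hl 2, hl 3, hl 4]
  have hy0 : 0 ≤ y := by
    rcases hycases with ⟨h, _⟩ | ⟨h, _⟩ <;> rw [h] <;>
      linarith [hl 0, hl 3, hl 4]
  have hxle1 : x ≤ l 1 + l 2 := min_le_left _ _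
  have hxle2 : x ≤ l 3 + l 4 + l 0 := min_le_right _ _
  have hyle1 : y ≤ l 3 + l 4 := min_le_left _ _
  have hyle2 : y ≤ x + l 0 := min_le_right _ _
  have ht1a : l 0 ≤ x + y := by
    rcases hycases with ⟨h, h'⟩ | ⟨h, h'⟩
    · rcases hxcases with ⟨h2, h2'⟩ | ⟨h2, h2'⟩ <;> rw [h, h2] <;>
        linarith [hp0, hl 3, hl 4]
    · rw [h]; linarith [hx0]
  have ht1b : x ≤ l 0 + y := by
    rcases hycases with ⟨h, h'⟩ | ⟨h, h'⟩
    · rw [h]; linarith [hxle2]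
    · rw [h]; linarith [hl 0]
  have ht1c : y ≤ l 0 + x := by linarith [hyle2]
  have ht2b : l 1 ≤ x + l 2 := by
    rcases hxcases with ⟨h, _⟩ | ⟨h, _⟩ <;> rw [h] <;> linarith [hl 2, hp1]
  have ht2c : l 2 ≤ x + l 1 := by
    rcases hxcases with ⟨h, _⟩ | ⟨h, _⟩ <;> rw [h] <;> linarith [hl 1, hp2]
  have ht3b : l 3 ≤ y + l 4 := by
    rcases hycases with ⟨h, _⟩ | ⟨h, _⟩
    · rw [h]; linarith [hl 4]
    · rw [h]
      rcases hxcases with ⟨h2, _⟩ | ⟨h2, _⟩ <;> rw [h2] <;> linarith [hp3, hl 0, hl 4]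
  have ht3c : l 4 ≤ y + l 3 := by
    rcases hycases with ⟨h, _⟩ | ⟨h, _⟩
    · rw [h]; linarith [hl 3]
    · rw [h]
      rcases hxcases with ⟨h2, _⟩ | ⟨h2, _⟩ <;> rw [h2] <;> linarith [hp4, hl 0, hl 3]
  -- construct a configuration
  have hdist10 : dist ((l 0 : ℝ) : ℂ) (0 : ℂ) = l 0 := by
    rw [dist_eq_norm, sub_zero, Complex.norm_real, Real.norm_eq_abs, abs_of_pos (hl 0)]
  obtain ⟨P3, hP31, hP30⟩ := Pentagon.exists_dist_dist hdist10 hx0 hy0 ht1a ht1b ht1c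
  obtain ⟨P2, hP21, hP23⟩ :=
    Pentagon.exists_dist_dist hP31 (hl 1).le (hl 2).le hxle1 ht2b ht2c
  obtain ⟨P4, hP43, hP40⟩ :=
    Pentagon.exists_dist_dist hP30 (hl 3).le (hl 4).le hyle1 ht3b ht3c
  set Q : Fin 5 → ℂ := ![0, (l 0 : ℂ), P2, P3, P4] with hQdef
  have hQ0 : Q 0 = 0 := rfl
  have hQ1 : Q 1 = (l 0 : ℂ) := rfl
  have hQ2 : Q 2 = P2 := rfl
  have hQ3 : Q 3 = P3 := rfl
  have hQ4 : Q 4 = P4 := rfl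
  have hQd : ∀ i, dist (Q i) (Q (i + 1)) = l i := by
    intro i
    fin_cases i
    · show dist (Q 0) (Q 1) = l 0
      rw [hQ0, hQ1, dist_comm]
      exact hdist10
    · show dist (Q 1) (Q 2) = l 1
      rw [hQ1, hQ2]
      exact hP21
    · show dist (Q 2) (Q 3) = l 2
      rw [hQ2, hQ3]
      exact hP23
    · show dist (Q 3) (Q 4) = l 3
      rw [hQ3, hQ4]
      exact hP43
    · show dist (Q 4) (Q (4 + 1)) = l 4
      rw [show (4 + 1 : Fin 5) = 0 by decide, hQ4, hQ0]
      exact hP40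
  refine ⟨⟨⟨Q, hQ0, hQ1, hQd⟩⟩, ?_, ?_⟩
  · -- compactness
    have hclosed : IsClosed {P : Fin 5 → ℂ | P 0 = 0 ∧ P 1 = (l 0 : ℂ) ∧
        ∀ i, dist (P i) (P (i + 1)) = l i} := by
      have h1 : IsClosed {P : Fin 5 → ℂ | P 0 = 0} :=
        isClosed_eq (continuous_apply 0) continuous_const
      have h2 : IsClosed {P : Fin 5 → ℂ | P 1 = (l 0 : ℂ)} :=
        isClosed_eq (continuous_apply 1) continuous_const
      have h3 : IsClosed {P : Fin 5 → ℂ | ∀ i, dist (P i) (P (i + 1)) = l i} := by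
        have heq : {P : Fin 5 → ℂ | ∀ i, dist (P i) (P (i + 1)) = l i} =
            ⋂ i, {P : Fin 5 → ℂ | dist (P i) (P (i + 1)) = l i} := by
          ext P; simp [Set.mem_iInter]
        rw [heq]
        exact isClosed_iInter fun i =>
          isClosed_eq ((continuous_apply i).dist (continuous_apply (i + 1))) continuous_const
      have heq : {P : Fin 5 → ℂ | P 0 = 0 ∧ P 1 = (l 0 : ℂ) ∧
          ∀ i, dist (P i) (P (i + 1)) = l i} =
          {P : Fin 5 → ℂ | P 0 = 0} ∩ ({P : Fin 5 → ℂ | P 1 = (l 0 : ℂ)} ∩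
            {P : Fin 5 → ℂ | ∀ i, dist (P i) (P (i + 1)) = l i}) := by
        ext P; simp [Set.mem_inter_iff, and_assoc]
      rw [heq]
      exact h1.inter (h2.inter h3)
    have hR : (0 : ℝ) ≤ l 0 + l 1 + l 2 + l 3 + l 4 := by
      linarith [hl 0, hl 1, hl 2, hl 3, hl 4]
    have hbdd : {P : Fin 5 → ℂ | P 0 = 0 ∧ P 1 = (l 0 : ℂ) ∧
        ∀ i, dist (P i) (P (i + 1)) = l i} ⊆
        Metric.closedBall 0 (l 0 + l 1 + l 2 + l 3 + l 4) := by
      rintro P ⟨h0, h1, hdst⟩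
      have hd0 : dist (P 0) (P 1) = l 0 := by
        have := hdst 0; rwa [show (0 + 1 : Fin 5) = 1 by decide] at this
      have hd1 : dist (P 1) (P 2) = l 1 := by
        have := hdst 1; rwa [show (1 + 1 : Fin 5) = 2 by decide] at this
      have hd2 : dist (P 2) (P 3) = l 2 := by
        have := hdst 2; rwa [show (2 + 1 : Fin 5) = 3 by decide] at this
      have hd3 : dist (P 3) (P 4) = l 3 := by
        have := hdst 3; rwa [show (3 + 1 : Fin 5) = 4 by decide] at this
      have hd4 : dist (P 4) (P 0) = l 4 := by
        have := hdst 4; rwa [show (4 + 1 : Fin 5) = 0 by decide] at this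
      have hb : ∀ i, dist (P i) (P 0) ≤ l 0 + l 1 + l 2 + l 3 + l 4 := by
        intro i
        fin_cases i
        · show dist (P 0) (P 0) ≤ _
          rw [dist_self]; exact hR
        · show dist (P 1) (P 0) ≤ _
          rw [dist_comm]
          linarith [hd0, hl 1, hl 2, hl 3, hl 4]
        · show dist (P 2) (P 0) ≤ _
          have := dist_triangle4 (P 2) (P 3) (P 4) (P 0)
          rw [hd2, hd3, hd4] at this
          linarith [hl 0, hl 1]
        · show dist (P 3) (P 0) ≤ _
          have := dist_triangle (P 3) (P 4) (P 0)
          rw [hd3, hd4] at this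
          linarith [hl 0, hl 1, hl 2]
        · show dist (P 4) (P 0) ≤ _
          rw [hd4]
          linarith [hl 0, hl 1, hl 2, hl 3]
      rw [Metric.mem_closedBall, dist_pi_le_iff hR]
      intro i
      have : dist (P i) ((0 : Fin 5 → ℂ) i) = dist (P i) (P 0) := by
        rw [h0]; rfl
      rw [this]
      exact hb i
    have hcomp : IsCompact {P : Fin 5 → ℂ | P 0 = 0 ∧ P 1 = (l 0 : ℂ) ∧
        ∀ i, dist (P i) (P (i + 1)) = l i} :=
      Metric.isCompact_of_isClosed_isBounded hclosed
        (Metric.isBounded_closedBall.subset hbdd)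
    exact isCompact_iff_compactSpace.mp hcomp
  · -- charted space
    have hiff : ∀ P : Fin 5 → ℂ,
        (P 0 = 0 ∧ P 1 = (l 0 : ℂ) ∧ ∀ i, dist (P i) (P (i + 1)) = l i) ↔
          Pentagon.pmap P = Pentagon.pc l := by
      intro P
      constructor
      · rintro ⟨h0, h1, hdst⟩
        have hfn : (fun j : Fin 4 => Complex.normSq (P (j.succ + 1) - P j.succ)) =
            fun j => l j.succ ^ 2 := by
          funext j
          have habs : ‖P (j.succ + 1) - P j.succ‖ =
              dist (P j.succ) (P (j.succ + 1)) := by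
            rw [dist_comm, Complex.dist_eq]
          rw [← Complex.sq_norm, habs, hdst j.succ]
        simp only [Pentagon.pmap, Pentagon.pc, Prod.mk.injEq]
        exact ⟨h0, h1, hfn⟩
      · intro h
        simp only [Pentagon.pmap, Pentagon.pc, Prod.mk.injEq] at h
        obtain ⟨h0, h1, h2⟩ := h
        refine ⟨h0, h1, ?_⟩
        have key : ∀ j : Fin 4, dist (P j.succ) (P (j.succ + 1)) = l j.succ := by
          intro j
          have hj := congrFun h2 j
          have habs : dist (P j.succ) (P (j.succ + 1)) ^ 2 = l j.succ ^ 2 := by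
            rw [dist_comm, Complex.dist_eq, Complex.sq_norm]
            exact hj
          calc dist (P j.succ) (P (j.succ + 1))
              = Real.sqrt (dist (P j.succ) (P (j.succ + 1)) ^ 2) :=
                (Real.sqrt_sq dist_nonneg).symm
            _ = Real.sqrt (l j.succ ^ 2) := by rw [habs]
            _ = l j.succ := Real.sqrt_sq (hl j.succ).le
        intro i
        rcases Fin.eq_zero_or_eq_succ i with rfl | ⟨j, rfl⟩
        · rw [h0, show (0 + 1 : Fin 5) = 1 by decide, h1, dist_eq_norm, zero_sub,
            norm_neg, Complex.norm_real, Real.norm_eq_abs, abs_of_pos (hl 0)]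
        · exact key j
    have hdim : Module.finrank ℝ (Fin 5 → ℂ) =
        Module.finrank ℝ (ℂ × ℂ × (Fin 4 → ℝ)) + 2 := by
      simp [Module.finrank_pi_fintype, Module.finrank_prod, Module.finrank_pi,
        Complex.finrank_real_complex, Finset.sum_const]
    have hcs : ChartedSpace (EuclideanSpace ℝ (Fin 2))
        {P : Fin 5 → ℂ // Pentagon.pmap P = Pentagon.pc l} :=
      Pentagon.chartedSpaceOfCharts fun p => by
        obtain ⟨h0, h1, hdst⟩ := (hiff p.1).mpr p.2
        exact Pentagon.exists_chart p (Pentagon.hasStrict_pmap p.1)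
          (Pentagon.Tmap_surj l hl hgen h0 h1 hdst) hdim
    have hpe : (fun P : Fin 5 → ℂ => P 0 = 0 ∧ P 1 = (l 0 : ℂ) ∧
        ∀ i, dist (P i) (P (i + 1)) = l i) = fun P => Pentagon.pmap P = Pentagon.pc l :=
      funext fun P => propext (hiff P)
    constructor
    rw [hpe]
    exact hcs
end

section
/- For the pentagonal linkage l = (1, 1, 1, 1/2, 2), the moduli space M(l), realized as the slice S(l) = { P : Fin 5 → ℝ² | P 0 = 0, P 1 = (1, 0), dist (P i) (P (i+1 mod 5)) = l i for all i }, is homeomorphic to the 2-torus, i.e. to the product Circle × Circle of two copies of the unit circle. -/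
noncomputable section
def Complex.abs : AbsoluteValue ℂ ℝ := NormedField.toAbsoluteValue ℂ
lemma Complex.norm_eq_abs (z : ℂ) : ‖z‖ = Complex.abs z := rfl
lemma Complex.sq_abs (z : ℂ) : Complex.abs z ^ 2 = Complex.normSq z := Complex.sq_norm z
lemma Complex.abs_ofReal (r : ℝ) : Complex.abs (r : ℂ) = |r| := Complex.norm_real r
lemma Complex.abs_re_le_abs (z : ℂ) : |z.re| ≤ Complex.abs z := Complex.abs_re_le_norm z
lemma Complex.continuous_abs : Continuous Complex.abs := continuous_norm
lemma Complex.dist_eq_abs (z w : ℂ) : dist z w = Complex.abs (z - w) := Complex.dist_eq z w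
lemma Circle.abs_coe (z : Circle) : Complex.abs (z : ℂ) = 1 := by
  rw [← Complex.norm_eq_abs]; exact Circle.norm_coe z
@[simp] lemma Complex.abs_two : Complex.abs 2 = 2 := by
  rw [← Complex.norm_eq_abs]; simp
namespace PentTorus
open Complex

def rr (u : ℂ) : ℝ := Complex.abs (2 + u)
def tt (u : ℂ) : ℝ := -(5/4 + u.re) / rr u
def CC (u : ℂ) (x : ℝ) : ℝ := 1 - (1 - tt u) * x^2
def ss (u : ℂ) (x : ℝ) : ℝ := x * Real.sqrt ((1 - tt u) * (1 + CC u x))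
def AA (u : ℂ) (x : ℝ) : ℂ := (CC u x : ℂ) + (ss u x : ℂ) * I
def aa (u : ℂ) (x : ℝ) : ℂ := (2 + u) * AA u x * ((rr u : ℂ))⁻¹
def WW (u : ℂ) (x : ℝ) : ℂ := 1 + aa u x + u/2
def rho (u : ℂ) (x : ℝ) : ℝ := Complex.abs (WW u x)
def mu (u : ℂ) (x : ℝ) : ℝ := (3 - rho u x^2)/(2 * rho u x)
def KK (u : ℂ) : ℝ := rr u + 5/4 + u.re
def QQ (u : ℂ) (x : ℝ) : ℝ :=
  KK u * (rho u x + 3) * (1 + mu u x) / (2 * rho u x * (rho u x + 1))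
def bet (u : ℂ) (x y : ℝ) : ℂ := (mu u x : ℂ) + ((y * Real.sqrt (QQ u x) : ℝ) : ℂ) * I
def bb (u : ℂ) (x y : ℝ) : ℂ := WW u x * bet u x y * ((rho u x : ℂ))⁻¹
def Pfun (u : ℂ) (x y : ℝ) : Fin 5 → ℂ :=
  ![0, 1, 1 + aa u x, 1 + aa u x + bb u x y, 1 + aa u x + bb u x y + u/2]

variable {u : ℂ} {x y : ℝ}

lemma normSq_one (hu : Complex.abs u = 1) : normSq u = 1 := by
  rw [← Complex.sq_abs, hu]; norm_num

lemma re_sq_add_im_sq (hu : Complex.abs u = 1) : u.re^2 + u.im^2 = 1 := by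
  have := normSq_one hu; rw [normSq_apply] at this; nlinarith [this]

lemma re_bounds (hu : Complex.abs u = 1) : -1 ≤ u.re ∧ u.re ≤ 1 := by
  have h := abs_re_le_abs u; rw [hu] at h
  constructor <;> [linarith [neg_abs_le u.re]; linarith [le_abs_self u.re]]

lemma rsq (hu : Complex.abs u = 1) : rr u ^ 2 = 5 + 4 * u.re := by
  have h := re_sq_add_im_sq hu
  rw [rr, Complex.sq_abs, normSq_apply]
  simp only [Complex.add_re, Complex.add_im]
  norm_num
  nlinarith [h]

lemma r_ge_one (hu : Complex.abs u = 1) : 1 ≤ rr u := by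
  have h1 := rsq hu
  have h2 := (re_bounds hu).1
  have h3 : (0:ℝ) ≤ rr u := Complex.abs.nonneg _
  nlinarith

lemma r_pos (hu : Complex.abs u = 1) : 0 < rr u := lt_of_lt_of_le one_pos (r_ge_one hu)

lemma tt_neg (hu : Complex.abs u = 1) : tt u < 0 := by
  have := (re_bounds hu).1
  have := r_pos hu
  rw [tt]
  apply div_neg_of_neg_of_pos <;> [linarith; linarith]

lemma tt_lt_one (hu : Complex.abs u = 1) : tt u < 1 := lt_trans (tt_neg hu) one_pos

lemma neg_one_lt_tt (hu : Complex.abs u = 1) : -1 < tt u := by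
  have h1 := rsq hu
  have h2 := (re_bounds hu).1
  have h3 := (re_bounds hu).2
  have h4 := r_pos hu
  rw [tt, neg_div, show (-1:ℝ) = -(1) by norm_num, neg_lt_neg_iff, div_lt_one h4]
  nlinarith

lemma r_mul_tt (hu : Complex.abs u = 1) : rr u * tt u = -(5/4 + u.re) := by
  rw [tt]; field_simp [(r_pos hu).ne']

lemma KK_eq (hu : Complex.abs u = 1) : KK u = rr u * (1 - tt u) := by
  have := r_mul_tt hu; rw [KK]; nlinarith [this]

lemma KK_pos (hu : Complex.abs u = 1) : 0 < KK u := by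
  have h1 := r_ge_one hu
  have h2 := (re_bounds hu).1
  rw [KK]; linarith

lemma CC_le_one (hu : Complex.abs u = 1) : CC u x ≤ 1 := by
  have h1 := tt_lt_one hu
  have h2 : 0 ≤ (1 - tt u) * x^2 := mul_nonneg (by linarith) (sq_nonneg x)
  rw [CC]; linarith

lemma tt_le_CC (hu : Complex.abs u = 1) (hx2 : x^2 ≤ 1) : tt u ≤ CC u x := by
  have h := tt_lt_one hu
  rw [CC]
  nlinarith

lemma neg_one_lt_CC (hu : Complex.abs u = 1) (hx2 : x^2 ≤ 1) : -1 < CC u x :=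
  lt_of_lt_of_le (neg_one_lt_tt hu) (tt_le_CC hu hx2)

lemma one_sub_CC : 1 - CC u x = (1 - tt u) * x^2 := by rw [CC]; ring

lemma ss_sq (hu : Complex.abs u = 1) (hx2 : x^2 ≤ 1) :
    ss u x ^ 2 = (1 - CC u x) * (1 + CC u x) := by
  have h1 : (0:ℝ) ≤ (1 - tt u) * (1 + CC u x) := by
    have h2 := tt_lt_one hu; have h3 := neg_one_lt_CC hu hx2
    exact mul_nonneg (by linarith) (by linarith)
  rw [ss, mul_pow, Real.sq_sqrt h1, one_sub_CC]; ring

lemma normSq_AA (hu : Complex.abs u = 1) (hx2 : x^2 ≤ 1) : normSq (AA u x) = 1 := by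
  have h := ss_sq hu hx2
  rw [AA, normSq_apply]
  simp
  nlinarith [h]

lemma abs_AA (hu : Complex.abs u = 1) (hx2 : x^2 ≤ 1) : Complex.abs (AA u x) = 1 := by
  have h := normSq_AA hu hx2
  have : Complex.abs (AA u x) ^ 2 = 1 := by rw [Complex.sq_abs, h]
  nlinarith [Complex.abs.nonneg (AA u x)]

lemma abs_aa (hu : Complex.abs u = 1) (hx2 : x^2 ≤ 1) : Complex.abs (aa u x) = 1 := by
  rw [aa]
  rw [map_mul, map_mul, map_inv₀, abs_AA hu hx2, Complex.abs_ofReal]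
  rw [show Complex.abs (2 + u) = rr u from rfl]
  rw [abs_of_pos (r_pos hu)]
  field_simp [(r_pos hu).ne']


-- master identity: for unit a, |1 + a + u/2|^2 = 9/4 + Re u + Re (a * (2 + conj u))
lemma normSq_W_master (u a : ℂ) (hu : Complex.abs u = 1) (ha : Complex.abs a = 1) :
    normSq (1 + a + u/2) = 9/4 + u.re + (a * (2 + (starRingEnd ℂ) u)).re := by
  have h1 := re_sq_add_im_sq hu
  have h2 := re_sq_add_im_sq ha
  simp only [normSq_apply, Complex.add_re, Complex.add_im, Complex.mul_re, Complex.mul_im,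
    Complex.div_re, Complex.div_im, Complex.one_re, Complex.one_im, Complex.conj_re,
    Complex.conj_im, Complex.normSq_apply, Complex.re_ofNat, Complex.im_ofNat]
  norm_num
  nlinarith [h1, h2]

lemma conj_two_add (u : ℂ) : (starRingEnd ℂ) (2 + u) = 2 + (starRingEnd ℂ) u := by
  simp [map_ofNat]

lemma two_add_mul_conj (hu : Complex.abs u = 1) :
    (2 + u) * (2 + (starRingEnd ℂ) u) = ((rr u ^ 2 : ℝ) : ℂ) := by
  rw [← conj_two_add, Complex.mul_conj, rr, Complex.sq_abs]

lemma aa_mul_conj (hu : Complex.abs u = 1) :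
    aa u x * (2 + (starRingEnd ℂ) u) = ((rr u : ℝ) : ℂ) * AA u x := by
  have h := two_add_mul_conj hu
  have hr : ((rr u : ℝ) : ℂ) ≠ 0 := by
    simpa using (r_pos hu).ne'
  rw [aa]
  field_simp
  rw [mul_comm (2+u) (AA u x), mul_assoc, h]
  push_cast
  ring

lemma re_aa_conj (hu : Complex.abs u = 1) :
    (aa u x * (2 + (starRingEnd ℂ) u)).re = rr u * CC u x := by
  rw [aa_mul_conj hu]
  simp [AA, Complex.mul_re]

lemma rho_sq (hu : Complex.abs u = 1) (hx2 : x^2 ≤ 1) :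
    rho u x ^ 2 = 9/4 + u.re + rr u * CC u x := by
  rw [rho, Complex.sq_abs, WW, normSq_W_master u (aa u x) hu (abs_aa hu hx2), re_aa_conj hu]

lemma rho_sq_sub_one (hu : Complex.abs u = 1) (hx2 : x^2 ≤ 1) :
    rho u x ^ 2 - 1 = rr u * (CC u x - tt u) := by
  have h1 := rho_sq hu hx2
  have h2 := r_mul_tt hu
  nlinarith [h1, h2]

lemma one_le_rho (hu : Complex.abs u = 1) (hx2 : x^2 ≤ 1) : 1 ≤ rho u x := by
  have h1 := rho_sq_sub_one hu hx2
  have h2 : 0 ≤ rr u * (CC u x - tt u) :=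
    mul_nonneg (r_pos hu).le (by linarith [tt_le_CC hu hx2])
  have h3 : 0 ≤ rho u x := Complex.abs.nonneg (WW u x)
  nlinarith [h1, h2, h3]

lemma rho_pos (hu : Complex.abs u = 1) (hx2 : x^2 ≤ 1) : 0 < rho u x :=
  lt_of_lt_of_le one_pos (one_le_rho hu hx2)

lemma rho_le (hu : Complex.abs u = 1) (hx2 : x^2 ≤ 1) : rho u x ≤ 5/2 := by
  have h1 : Complex.abs (WW u x) ≤ Complex.abs (1 + aa u x) + Complex.abs (u/2) := by
    rw [WW]; exact Complex.abs.add_le _ _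
  have h2 : Complex.abs (1 + aa u x) ≤ Complex.abs 1 + Complex.abs (aa u x) :=
    Complex.abs.add_le _ _
  have h3 : Complex.abs (u/2) = 1/2 := by rw [map_div₀, hu]; simp
  have h4 := abs_aa hu hx2
  rw [rho]
  simp only [map_one] at h2
  linarith

lemma mu_le_one (hu : Complex.abs u = 1) (hx2 : x^2 ≤ 1) : mu u x ≤ 1 := by
  have h1 := one_le_rho hu hx2
  rw [mu, div_le_one (by linarith)]
  nlinarith

lemma one_add_mu_pos (hu : Complex.abs u = 1) (hx2 : x^2 ≤ 1) : 0 < 1 + mu u x := by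
  have h1 := one_le_rho hu hx2
  have h2 := rho_le hu hx2
  rw [mu]
  have : (3 - rho u x ^ 2) / (2 * rho u x) > -1 := by
    rw [gt_iff_lt, lt_div_iff₀ (by linarith)]
    nlinarith
  linarith

lemma QQ_nonneg (hu : Complex.abs u = 1) (hx2 : x^2 ≤ 1) : 0 ≤ QQ u x := by
  have h1 := one_le_rho hu hx2
  have h2 := one_add_mu_pos hu hx2
  have h3 := KK_pos hu
  rw [QQ]
  apply div_nonneg
  · apply mul_nonneg (mul_nonneg h3.le (by linarith)) h2.le
  · nlinarith

lemma ysq_QQ (hu : Complex.abs u = 1) (hxy : x^2 + y^2 = 1) :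
    y^2 * QQ u x = (1 - mu u x) * (1 + mu u x) := by
  have hx2 : x^2 ≤ 1 := by nlinarith [sq_nonneg y]
  have hCt : CC u x - tt u = (1 - tt u) * y^2 := by
    rw [CC]; linear_combination (-(1 - tt u)) * hxy
  have h1 : rho u x ^ 2 - 1 = KK u * y^2 := by
    rw [rho_sq_sub_one hu hx2, hCt, KK_eq hu]; ring
  have hrpos := rho_pos hu hx2
  have hmu1 : 1 - mu u x = (rho u x - 1) * (rho u x + 3) / (2 * rho u x) := by
    rw [mu]; field_simp; ring
  rw [QQ, hmu1, mu]
  field_simp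
  linear_combination (-(rho u x * 2 + (3 - rho u x ^ 2))) * h1


lemma rho_ne (hu : Complex.abs u = 1) (hx2 : x^2 ≤ 1) : ((rho u x : ℝ) : ℂ) ≠ 0 := by
  simpa using (rho_pos hu hx2).ne'

lemma normSq_bet (hu : Complex.abs u = 1) (hxy : x^2 + y^2 = 1) :
    normSq (bet u x y) = 1 := by
  have hx2 : x^2 ≤ 1 := by nlinarith [sq_nonneg y]
  have h1 : (y * Real.sqrt (QQ u x))^2 = y^2 * QQ u x := by
    rw [mul_pow, Real.sq_sqrt (QQ_nonneg hu hx2)]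
  have h2 := ysq_QQ hu hxy
  rw [bet, normSq_apply]
  simp
  nlinarith [h1, h2]

lemma abs_bet (hu : Complex.abs u = 1) (hxy : x^2 + y^2 = 1) :
    Complex.abs (bet u x y) = 1 := by
  have h := normSq_bet hu hxy
  have : Complex.abs (bet u x y) ^ 2 = 1 := by rw [Complex.sq_abs, h]
  nlinarith [Complex.abs.nonneg (bet u x y)]

lemma abs_bb (hu : Complex.abs u = 1) (hxy : x^2 + y^2 = 1) :
    Complex.abs (bb u x y) = 1 := by
  have hx2 : x^2 ≤ 1 := by nlinarith [sq_nonneg y]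
  have hr := rho_pos hu hx2
  rw [bb, map_mul, map_mul, map_inv₀, abs_bet hu hxy, Complex.abs_ofReal,
    abs_of_pos hr]
  rw [show Complex.abs (WW u x) = rho u x from rfl]
  field_simp [hr.ne']

lemma W_mul_conj_bb (hu : Complex.abs u = 1) (hxy : x^2 + y^2 = 1) :
    WW u x * (starRingEnd ℂ) (bb u x y)
      = ((rho u x : ℝ) : ℂ) * (starRingEnd ℂ) (bet u x y) := by
  have hx2 : x^2 ≤ 1 := by nlinarith [sq_nonneg y]
  have hρ := rho_ne hu hx2
  have hns : ((normSq (WW u x) : ℝ) : ℂ) = ((rho u x : ℝ) : ℂ)^2 := by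
    rw [← Complex.sq_abs]; push_cast; rfl
  rw [bb, map_mul, map_mul, map_inv₀, Complex.conj_ofReal]
  calc WW u x * ((starRingEnd ℂ) (WW u x) * (starRingEnd ℂ) (bet u x y) * (((rho u x : ℝ) : ℂ))⁻¹)
      = (WW u x * (starRingEnd ℂ) (WW u x)) * (starRingEnd ℂ) (bet u x y) * (((rho u x : ℝ) : ℂ))⁻¹ := by ring
    _ = ((rho u x : ℝ) : ℂ)^2 * (starRingEnd ℂ) (bet u x y) * (((rho u x : ℝ) : ℂ))⁻¹ := by
        rw [Complex.mul_conj, hns]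
    _ = ((rho u x : ℝ) : ℂ) * (starRingEnd ℂ) (bet u x y) := by field_simp

lemma re_W_conj_bb (hu : Complex.abs u = 1) (hxy : x^2 + y^2 = 1) :
    (WW u x * (starRingEnd ℂ) (bb u x y)).re = rho u x * mu u x := by
  rw [W_mul_conj_bb hu hxy]
  simp [bet, Complex.mul_re]

lemma normSq_W_add_bb (hu : Complex.abs u = 1) (hxy : x^2 + y^2 = 1) :
    normSq (WW u x + bb u x y) = 4 := by
  have hx2 : x^2 ≤ 1 := by nlinarith [sq_nonneg y]
  have h1 := Complex.normSq_add (WW u x) (bb u x y)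
  have h2 : normSq (WW u x) = rho u x ^ 2 := by rw [← Complex.sq_abs]; rfl
  have h3 : normSq (bb u x y) = 1 := by
    have := abs_bb hu hxy
    rw [← Complex.sq_abs, this]; norm_num
  have h4 := re_W_conj_bb hu hxy
  have h5 : rho u x * mu u x = (3 - rho u x^2)/2 := by
    rw [mu]; field_simp [(rho_pos hu hx2).ne']
  rw [h1, h2, h3, h4, h5]; ring

lemma abs_W_add_bb (hu : Complex.abs u = 1) (hxy : x^2 + y^2 = 1) :
    Complex.abs (WW u x + bb u x y) = 2 := by
  have h := normSq_W_add_bb hu hxy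
  have h2 : Complex.abs (WW u x + bb u x y) ^ 2 = 4 := by rw [Complex.sq_abs, h]
  nlinarith [Complex.abs.nonneg (WW u x + bb u x y)]

lemma Pfun_mem (hu : Complex.abs u = 1) (hxy : x^2 + y^2 = 1) :
    Pfun u x y 0 = 0 ∧ Pfun u x y 1 = 1 ∧
      ∀ i, dist (Pfun u x y i) (Pfun u x y (i + 1)) = ![1, 1, 1, 1/2, 2] i := by
  have hx2 : x^2 ≤ 1 := by nlinarith [sq_nonneg y]
  have ha := abs_aa hu hx2
  have hb := abs_bb hu hxy
  have hWb := abs_W_add_bb hu hxy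
  refine ⟨rfl, rfl, ?_⟩
  intro i
  fin_cases i
  · show dist (Pfun u x y 0) (Pfun u x y 1) = 1
    simp [Pfun, Complex.dist_eq_abs]
  · show dist (Pfun u x y 1) (Pfun u x y 2) = 1
    simp only [Pfun, Matrix.cons_val_one, Matrix.head_cons, Matrix.cons_val_two, Matrix.tail_cons, Matrix.cons_val_zero]
    rw [Complex.dist_eq_abs, show (1 : ℂ) - (1 + aa u x) = -(aa u x) by ring, map_neg_eq_map, ha]
  · show dist (Pfun u x y 2) (Pfun u x y 3) = 1
    simp only [Pfun, Matrix.cons_val_two, Matrix.tail_cons, Matrix.head_cons,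
      Matrix.cons_val_three]
    rw [Complex.dist_eq_abs,
      show (1 + aa u x) - (1 + aa u x + bb u x y) = -(bb u x y) by ring, map_neg_eq_map, hb]
  · show dist (Pfun u x y 3) (Pfun u x y 4) = 1/2
    simp only [Pfun, Matrix.cons_val_three, Matrix.tail_cons, Matrix.head_cons,
      Matrix.cons_val_four]
    rw [Complex.dist_eq_abs,
      show (1 + aa u x + bb u x y) - (1 + aa u x + bb u x y + u/2) = -(u/2) by ring,
      map_neg_eq_map, map_div₀, hu]
    simp
  · show dist (Pfun u x y 4) (Pfun u x y 0) = 2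
    simp only [Pfun, Matrix.cons_val_four, Matrix.tail_cons, Matrix.head_cons,
      Matrix.cons_val_zero]
    rw [Complex.dist_eq_abs, sub_zero,
      show (1 + aa u x + bb u x y + u/2) = WW u x + bb u x y by rw [WW]; ring, hWb]


lemma QQ_pos (hu : Complex.abs u = 1) (hx2 : x^2 ≤ 1) : 0 < QQ u x := by
  have h1 := one_le_rho hu hx2
  apply div_pos
  · exact mul_pos (mul_pos (KK_pos hu) (by linarith)) (one_add_mu_pos hu hx2)
  · nlinarith

lemma two_add_ne (hu : Complex.abs u = 1) : (2 + u : ℂ) ≠ 0 := by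
  intro h
  have : Complex.abs (2 + u) = 0 := by rw [h]; simp
  exact (r_pos hu).ne' this

lemma WW_ne (hu : Complex.abs u = 1) (hx2 : x^2 ≤ 1) : WW u x ≠ 0 := by
  intro h
  have : Complex.abs (WW u x) = 0 := by rw [h]; simp
  exact (rho_pos hu hx2).ne' this

lemma rr_coe_ne (hu : Complex.abs u = 1) : ((rr u : ℝ) : ℂ) ≠ 0 := by
  simpa using (r_pos hu).ne'

lemma pent_inj {u u' : ℂ} {x y x' y' : ℝ}
    (hu : Complex.abs u = 1) (hu' : Complex.abs u' = 1)
    (hxy : x^2 + y^2 = 1) (hxy' : x'^2 + y'^2 = 1)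
    (h : Pfun u x y = Pfun u' x' y') : u = u' ∧ x = x' ∧ y = y' := by
  have hx2 : x^2 ≤ 1 := by nlinarith [sq_nonneg y]
  have hx2' : x'^2 ≤ 1 := by nlinarith [sq_nonneg y']
  have e2 := congrFun h 2
  have e3 := congrFun h 3
  have e4 := congrFun h 4
  simp only [Pfun, Matrix.cons_val_two, Matrix.cons_val_three, Matrix.cons_val_four,
    Matrix.tail_cons, Matrix.head_cons] at e2 e3 e4
  have haa : aa u x = aa u' x' := by linear_combination e2
  have hbb : bb u x y = bb u' x' y' := by linear_combination e3 - e2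
  have huu : u = u' := by linear_combination 2 * e4 - 2 * e3
  subst huu
  have hAA : AA u x = AA u x' := by
    have h1 : (2 + u) * AA u x * ((rr u : ℝ) : ℂ)⁻¹ = (2 + u) * AA u x' * ((rr u : ℝ) : ℂ)⁻¹ := haa
    have h2 := mul_right_cancel₀ (inv_ne_zero (rr_coe_ne hu)) h1
    exact mul_left_cancel₀ (two_add_ne hu) h2
  have hC : CC u x = CC u x' := by
    have := congrArg Complex.re hAA
    simpa [AA] using this
  have hxx : x = x' := by
    have hs : ss u x = ss u x' := by
      have := congrArg Complex.im hAA
      simpa [AA] using this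
    have hx2eq : (1 - tt u) * x^2 = (1 - tt u) * x'^2 := by
      have h1 := @one_sub_CC u x
      have h2 := @one_sub_CC u x'
      rw [hC] at h1; linarith
    have hsq : Real.sqrt ((1 - tt u) * (1 + CC u x)) > 0 := by
      apply Real.sqrt_pos.mpr
      have := tt_lt_one hu
      have := neg_one_lt_CC hu hx2
      exact mul_pos (by linarith) (by linarith)
    rw [ss, ss, ← hC] at hs
    exact mul_right_cancel₀ hsq.ne' hs
  subst hxx
  refine ⟨rfl, rfl, ?_⟩
  have hbet : bet u x y = bet u x y' := by
    have h1 : WW u x * bet u x y * ((rho u x : ℝ) : ℂ)⁻¹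
        = WW u x * bet u x y' * ((rho u x : ℝ) : ℂ)⁻¹ := hbb
    have h2 := mul_right_cancel₀ (inv_ne_zero (rho_ne hu hx2)) h1
    exact mul_left_cancel₀ (WW_ne hu hx2) h2
  have him : y * Real.sqrt (QQ u x) = y' * Real.sqrt (QQ u x) := by
    have := congrArg Complex.im hbet
    simpa [bet] using this
  have hq : Real.sqrt (QQ u x) > 0 := Real.sqrt_pos.mpr (QQ_pos hu hx2)
  exact mul_right_cancel₀ hq.ne' him


lemma eq_of_sq_eq_nonneg {p q : ℝ} (h : p^2 = q^2) (hp : 0 ≤ p) (hq : 0 ≤ q) : p = q := by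
  rw [← Real.sqrt_sq hp, h, Real.sqrt_sq hq]

set_option maxHeartbeats 1000000 in
lemma pent_surj {P : Fin 5 → ℂ} (h0 : P 0 = 0) (h1 : P 1 = 1)
    (hd : ∀ i, dist (P i) (P (i + 1)) = ![1, 1, 1, 1/2, 2] i) :
    ∃ (u : ℂ) (x y : ℝ), Complex.abs u = 1 ∧ x^2 + y^2 = 1 ∧ Pfun u x y = P := by
  set a : ℂ := P 2 - 1 with ha_def
  set b : ℂ := P 3 - P 2 with hb_def
  set u : ℂ := 2 * (P 4 - P 3) with hu_def
  have ha : Complex.abs a = 1 := by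
    have h := hd 1
    rw [show ((1:Fin 5) + 1) = 2 from rfl, h1, Complex.dist_eq_abs] at h
    rw [show (![1, 1, 1, 1/2, 2] : Fin 5 → ℝ) 1 = 1 from rfl] at h
    rw [ha_def, show P 2 - 1 = -(1 - P 2) by ring, map_neg_eq_map, h]
  have hb : Complex.abs b = 1 := by
    have h := hd 2
    rw [show ((2:Fin 5) + 1) = 3 from rfl, Complex.dist_eq_abs] at h
    rw [show (![1, 1, 1, 1/2, 2] : Fin 5 → ℝ) 2 = 1 from rfl] at h
    rw [hb_def, show P 3 - P 2 = -(P 2 - P 3) by ring, map_neg_eq_map, h]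
  have hu : Complex.abs u = 1 := by
    have h := hd 3
    rw [show ((3:Fin 5) + 1) = 4 from rfl, Complex.dist_eq_abs] at h
    rw [show (![1, 1, 1, 1/2, 2] : Fin 5 → ℝ) 3 = 1/2 from rfl] at h
    rw [hu_def, map_mul, show P 4 - P 3 = -(P 3 - P 4) by ring, map_neg_eq_map, h]
    simp
  have hP4 : (1 : ℂ) + a + b + u/2 = P 4 := by
    rw [ha_def, hb_def, hu_def]; ring
  have habs4 : Complex.abs (1 + a + b + u/2) = 2 := by
    have h := hd 4
    rw [show ((4:Fin 5) + 1) = 0 from rfl, h0, Complex.dist_eq_abs, sub_zero] at h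
    rw [show (![1, 1, 1, 1/2, 2] : Fin 5 → ℝ) 4 = 2 from rfl] at h
    rw [hP4, h]
  -- basic quantities
  set W' : ℂ := 1 + a + u/2 with hW'_def
  set ρ' : ℝ := Complex.abs W' with hρ'_def
  have hWb : W' + b = 1 + a + b + u/2 := by rw [hW'_def]; ring
  have hρ'_ge : 1 ≤ ρ' := by
    have h := Complex.abs.add_le W' b
    rw [hWb, habs4, hb] at h
    rw [hρ'_def]; linarith
  have hρ'_pos : (0:ℝ) < ρ' := lt_of_lt_of_le one_pos hρ'_ge
  have hρ'_ne : ((ρ' : ℝ) : ℂ) ≠ 0 := by simpa using hρ'_pos.ne'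
  have hρ'_le : ρ' ≤ 5/2 := by
    have h : Complex.abs W' ≤ Complex.abs (1 + a) + Complex.abs (u/2) := by
      rw [hW'_def]; exact Complex.abs.add_le _ _
    have h2 : Complex.abs (1 + a) ≤ Complex.abs 1 + Complex.abs a := Complex.abs.add_le _ _
    have h3 : Complex.abs (u/2) = 1/2 := by rw [map_div₀, hu]; simp
    simp only [map_one, ha] at h2
    rw [hρ'_def]; linarith
  have hnsW' : normSq W' = ρ'^2 := by rw [hρ'_def, Complex.sq_abs]
  -- A' and its properties
  set A' : ℂ := a * (2 + (starRingEnd ℂ) u) * ((rr u : ℝ) : ℂ)⁻¹ with hA'_def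
  have hrA' : ((rr u : ℝ) : ℂ) * A' = a * (2 + (starRingEnd ℂ) u) := by
    rw [hA'_def]; field_simp [rr_coe_ne hu]
  have hnsA' : normSq A' = 1 := by
    rw [hA'_def, normSq_mul, normSq_mul, normSq_inv, ← conj_two_add, normSq_conj,
      normSq_ofReal, ← Complex.sq_abs (2 + u)]
    rw [show Complex.abs (2 + u) = rr u from rfl]
    have h2 : normSq a = 1 := normSq_one ha
    have := r_pos hu
    field_simp [h2]
    exact h2
  set C' : ℝ := A'.re with hC'_def
  have himA' : A'.im^2 = 1 - C'^2 := by
    have := hnsA'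
    rw [normSq_apply] at this
    rw [hC'_def]; nlinarith [this]
  have hC'_le : C' ≤ 1 := by nlinarith [sq_nonneg A'.im, himA']
  have hrhosq : ρ'^2 = 9/4 + u.re + rr u * C' := by
    have h := normSq_W_master u a hu ha
    have h2 : (a * (2 + (starRingEnd ℂ) u)).re = rr u * C' := by
      rw [← hrA', Complex.mul_re]
      simp [hC'_def]
    rw [hW'_def] at hnsW'
    rw [← hnsW', h, h2]
  have hC'_ge : tt u ≤ C' := by
    have h2 := r_mul_tt hu
    have h3 := r_pos hu
    have h4 : rr u * (C' - tt u) = ρ'^2 - 1 := by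
      rw [mul_sub, h2]; linarith [hrhosq]
    nlinarith
  -- define x and y
  have httlt := tt_lt_one hu
  have harg : 0 ≤ (1 - C')/(1 - tt u) := div_nonneg (by linarith) (by linarith)
  set x : ℝ := if 0 ≤ A'.im then Real.sqrt ((1 - C')/(1 - tt u))
    else -Real.sqrt ((1 - C')/(1 - tt u)) with hx_def
  have hx2eq : x^2 = (1 - C')/(1 - tt u) := by
    rw [hx_def]
    split_ifs <;> [skip; rw [neg_pow]] <;> simp [Real.sq_sqrt harg]
  have hx2le : x^2 ≤ 1 := by
    rw [hx2eq, div_le_one (by linarith)]; linarith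
  set y : ℝ := if 0 ≤ (b * (starRingEnd ℂ) W').im then Real.sqrt (1 - x^2)
    else -Real.sqrt (1 - x^2) with hy_def
  have hy2 : y^2 = 1 - x^2 := by
    rw [hy_def]
    split_ifs <;> [skip; rw [neg_pow]] <;> simp [Real.sq_sqrt (by linarith : (0:ℝ) ≤ 1 - x^2)]
  have hxy : x^2 + y^2 = 1 := by rw [hy2]; ring
  -- CC u x = C'
  have hCCx : CC u x = C' := by
    have hne : (1 : ℝ) - tt u ≠ 0 := by linarith
    rw [CC, hx2eq]
    field_simp
    ring
  -- ss u x = A'.im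
  have hssx : ss u x = A'.im := by
    have hsq : ss u x ^2 = A'.im^2 := by
      rw [ss_sq hu hx2le, hCCx, himA']; ring
    have hCgt : -1 < C' := by rw [← hCCx]; exact neg_one_lt_CC hu hx2le
    have hsqrt_nonneg : 0 ≤ Real.sqrt ((1 - tt u) * (1 + CC u x)) := Real.sqrt_nonneg _
    by_cases him : 0 ≤ A'.im
    · have hxnn : 0 ≤ x := by rw [hx_def, if_pos him]; exact Real.sqrt_nonneg _
      exact eq_of_sq_eq_nonneg hsq (mul_nonneg hxnn hsqrt_nonneg) him
    · push_neg at him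
      have hxnp : x ≤ 0 := by
        rw [hx_def, if_neg (not_le.mpr him)]
        simp [Real.sqrt_nonneg]
      have : -(ss u x) = -(A'.im) := by
        apply eq_of_sq_eq_nonneg
        · rw [neg_pow, neg_pow]; simp [hsq]
        · rw [ss, ← neg_mul]
          exact mul_nonneg (by linarith) hsqrt_nonneg
        · linarith
      linarith
  have hAAx : AA u x = A' := by
    rw [AA]
    apply Complex.ext
    · simp [hCCx, hC'_def]
    · simp [hssx]
  have haax : aa u x = a := by
    have hrne := rr_coe_ne hu
    rw [aa, hAAx, hA'_def]
    calc (2+u) * (a * (2 + (starRingEnd ℂ) u) * ((rr u : ℝ) : ℂ)⁻¹) * ((rr u : ℝ) : ℂ)⁻¹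
        = a * ((2+u) * (2 + (starRingEnd ℂ) u)) * (((rr u : ℝ) : ℂ)^2)⁻¹ := by ring
      _ = a * ((rr u ^ 2 : ℝ) : ℂ) * (((rr u : ℝ) : ℂ)^2)⁻¹ := by rw [two_add_mul_conj hu]
      _ = a := by push_cast; field_simp
  have hWWx : WW u x = W' := by rw [WW, haax, hW'_def]
  have hrhox : rho u x = ρ' := by rw [rho, hWWx, hρ'_def]
  set β : ℂ := b * (starRingEnd ℂ) W' * ((ρ' : ℝ) : ℂ)⁻¹ with hβ_def
  have hWconj : W' * (starRingEnd ℂ) W' = ((ρ'^2 : ℝ) : ℂ) := by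
    rw [Complex.mul_conj, hnsW']
  have hbeq : W' * β * ((ρ' : ℝ) : ℂ)⁻¹ = b := by
    rw [hβ_def]
    calc W' * (b * (starRingEnd ℂ) W' * ((ρ' : ℝ) : ℂ)⁻¹) * ((ρ' : ℝ) : ℂ)⁻¹
        = b * (W' * (starRingEnd ℂ) W') * (((ρ' : ℝ) : ℂ)^2)⁻¹ := by ring
      _ = b * ((ρ'^2 : ℝ) : ℂ) * (((ρ' : ℝ) : ℂ)^2)⁻¹ := by rw [hWconj]
      _ = b := by push_cast; field_simp
  have hnsb : normSq b = 1 := normSq_one hb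
  have hns4 : normSq (W' + b) = 4 := by
    have h : Complex.abs (W' + b) = 2 := by rw [hWb]; exact habs4
    rw [← Complex.sq_abs, h]; norm_num
  have h6 : (W' * (starRingEnd ℂ) b).re = (3 - ρ'^2)/2 := by
    have h5 := Complex.normSq_add W' b
    rw [hns4, hnsW', hnsb] at h5
    linarith
  have h7 : (b * (starRingEnd ℂ) W').re = (3 - ρ'^2)/2 := by
    have hc : (starRingEnd ℂ) (W' * (starRingEnd ℂ) b) = b * (starRingEnd ℂ) W' := by
      rw [map_mul, Complex.conj_conj]; ring
    rw [← hc, Complex.conj_re, h6]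
  have hreβ : β.re = mu u x := by
    rw [mu, hrhox, hβ_def, ← Complex.ofReal_inv, Complex.mul_re]
    simp only [Complex.ofReal_re, Complex.ofReal_im, mul_zero, sub_zero]
    rw [h7]
    field_simp [hρ'_pos.ne']
  have hnsβ : normSq β = 1 := by
    rw [hβ_def, normSq_mul, normSq_mul, normSq_inv, normSq_conj, normSq_ofReal, hnsb, hnsW']
    field_simp [hρ'_pos.ne']
  have himβ : β.im^2 = 1 - mu u x^2 := by
    have hh := hnsβ
    rw [normSq_apply] at hh
    linear_combination hh - (β.re + mu u x) * hreβ
  have hβim : β.im = (b * (starRingEnd ℂ) W').im * ρ'⁻¹ := by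
    rw [hβ_def, ← Complex.ofReal_inv, Complex.mul_im]
    simp [Complex.ofReal_re, Complex.ofReal_im]
  have hbetx : bet u x y = β := by
    apply Complex.ext
    · rw [show (bet u x y).re = mu u x by simp [bet]]
      exact hreβ.symm
    · rw [show (bet u x y).im = y * Real.sqrt (QQ u x) by simp [bet]]
      have hsq : (y * Real.sqrt (QQ u x))^2 = β.im^2 := by
        rw [mul_pow, Real.sq_sqrt (QQ_nonneg hu hx2le), himβ]
        have hyq := ysq_QQ hu hxy
        nlinarith [hyq]
      by_cases him : 0 ≤ (b * (starRingEnd ℂ) W').im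
      · have hynn : 0 ≤ y := by rw [hy_def, if_pos him]; exact Real.sqrt_nonneg _
        have hβnn : 0 ≤ β.im := by
          rw [hβim]; exact mul_nonneg him (by positivity)
        exact eq_of_sq_eq_nonneg hsq (mul_nonneg hynn (Real.sqrt_nonneg _)) hβnn
      · push_neg at him
        have hynp : y ≤ 0 := by
          rw [hy_def, if_neg (not_le.mpr him)]; simp [Real.sqrt_nonneg]
        have hβnp : β.im ≤ 0 := by
          rw [hβim]
          exact mul_nonpos_of_nonpos_of_nonneg him.le (by positivity)
        have hneg : -(y * Real.sqrt (QQ u x)) = -(β.im) := by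
          apply eq_of_sq_eq_nonneg
          · rw [neg_pow, neg_pow]; simp [hsq]
          · rw [neg_nonneg]
            exact mul_nonpos_of_nonpos_of_nonneg hynp (Real.sqrt_nonneg _)
          · linarith
        linarith
  have hbbx : bb u x y = b := by
    rw [bb, hWWx, hbetx, hrhox]; exact hbeq
  refine ⟨u, x, y, hu, hxy, ?_⟩
  funext i
  fin_cases i
  · show Pfun u x y 0 = P 0
    rw [h0]; rfl
  · show Pfun u x y 1 = P 1
    rw [h1]; rfl
  · show Pfun u x y 2 = P 2
    show 1 + aa u x = P 2
    rw [haax, ha_def]; ring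
  · show Pfun u x y 3 = P 3
    show 1 + aa u x + bb u x y = P 3
    rw [haax, hbbx, ha_def, hb_def]; ring
  · show Pfun u x y 4 = P 4
    show 1 + aa u x + bb u x y + u/2 = P 4
    rw [haax, hbbx]; exact hP4


lemma re_sq_le_one {v : ℂ} (hv : Complex.abs v = 1) : v.re^2 ≤ 1 := by
  nlinarith [re_sq_add_im_sq hv, sq_nonneg v.im]

section Continuity

abbrev CC2 := Circle × Circle

lemma hc1 : Continuous (fun p : CC2 => (p.1 : ℂ)) :=
  continuous_subtype_val.comp continuous_fst
lemma hc2 : Continuous (fun p : CC2 => (p.2 : ℂ)) :=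
  continuous_subtype_val.comp continuous_snd

lemma cont_rr : Continuous (fun p : CC2 => rr (p.1 : ℂ)) :=
  Complex.continuous_abs.comp (continuous_const.add hc1)

lemma rr_ne (p : CC2) : rr (p.1 : ℂ) ≠ 0 := (r_pos (Circle.abs_coe p.1)).ne'

lemma cont_tt : Continuous (fun p : CC2 => tt (p.1 : ℂ)) := by
  apply Continuous.div (by continuity) cont_rr rr_ne

lemma cont_x : Continuous (fun p : CC2 => (p.2 : ℂ).re) := Complex.continuous_re.comp hc2
lemma cont_y : Continuous (fun p : CC2 => (p.2 : ℂ).im) := Complex.continuous_im.comp hc2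

lemma cont_CC : Continuous (fun p : CC2 => CC (p.1 : ℂ) (p.2 : ℂ).re) := by
  unfold CC
  exact continuous_const.sub ((continuous_const.sub cont_tt).mul (cont_x.pow 2))

lemma cont_ss : Continuous (fun p : CC2 => ss (p.1 : ℂ) (p.2 : ℂ).re) := by
  unfold ss
  exact cont_x.mul (Real.continuous_sqrt.comp
    ((continuous_const.sub cont_tt).mul (continuous_const.add cont_CC)))

lemma cont_AA : Continuous (fun p : CC2 => AA (p.1 : ℂ) (p.2 : ℂ).re) := by
  unfold AA
  exact (Complex.continuous_ofReal.comp cont_CC).add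
    ((Complex.continuous_ofReal.comp cont_ss).mul continuous_const)

lemma cont_aa : Continuous (fun p : CC2 => aa (p.1 : ℂ) (p.2 : ℂ).re) := by
  unfold aa
  refine ((continuous_const.add hc1).mul cont_AA).mul (Continuous.inv₀
    (Complex.continuous_ofReal.comp cont_rr) ?_)
  intro p
  simpa using rr_ne p

lemma cont_WW : Continuous (fun p : CC2 => WW (p.1 : ℂ) (p.2 : ℂ).re) := by
  unfold WW
  exact (continuous_const.add cont_aa).add (hc1.div_const 2)

lemma cont_rho : Continuous (fun p : CC2 => rho (p.1 : ℂ) (p.2 : ℂ).re) :=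
  Complex.continuous_abs.comp cont_WW

lemma rho_ne' (p : CC2) : rho (p.1 : ℂ) (p.2 : ℂ).re ≠ 0 :=
  (rho_pos (Circle.abs_coe p.1) (re_sq_le_one (Circle.abs_coe p.2))).ne'

lemma rho_pos' (p : CC2) : 0 < rho (p.1 : ℂ) (p.2 : ℂ).re :=
  rho_pos (Circle.abs_coe p.1) (re_sq_le_one (Circle.abs_coe p.2))

lemma cont_mu : Continuous (fun p : CC2 => mu (p.1 : ℂ) (p.2 : ℂ).re) := by
  unfold mu
  apply Continuous.div (continuous_const.sub (cont_rho.pow 2)) (continuous_const.mul cont_rho)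
  intro p
  have := rho_pos' p
  exact (mul_pos two_pos this).ne'

lemma cont_QQ : Continuous (fun p : CC2 => QQ (p.1 : ℂ) (p.2 : ℂ).re) := by
  unfold QQ KK
  apply Continuous.div
  · exact (((cont_rr.add continuous_const).add (Complex.continuous_re.comp hc1)).mul
      (cont_rho.add continuous_const)).mul (continuous_const.add cont_mu)
  · exact (continuous_const.mul cont_rho).mul (cont_rho.add continuous_const)
  · intro p
    have := rho_pos' p
    exact (mul_pos (mul_pos two_pos this) (by linarith)).ne'

lemma cont_bet : Continuous (fun p : CC2 => bet (p.1 : ℂ) (p.2 : ℂ).re (p.2 : ℂ).im) := by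
  unfold bet
  exact (Complex.continuous_ofReal.comp cont_mu).add
    ((Complex.continuous_ofReal.comp (cont_y.mul (Real.continuous_sqrt.comp cont_QQ))).mul
      continuous_const)

lemma cont_bb : Continuous (fun p : CC2 => bb (p.1 : ℂ) (p.2 : ℂ).re (p.2 : ℂ).im) := by
  unfold bb
  refine (cont_WW.mul cont_bet).mul (Continuous.inv₀
    (Complex.continuous_ofReal.comp cont_rho) ?_)
  intro p
  simpa using rho_ne' p

lemma cont_G : Continuous (fun p : CC2 => Pfun (p.1 : ℂ) (p.2 : ℂ).re (p.2 : ℂ).im) := by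
  apply continuous_pi
  intro i
  fin_cases i
  · exact continuous_const
  · exact continuous_const
  · show Continuous fun p : CC2 => Pfun (p.1 : ℂ) (p.2 : ℂ).re (p.2 : ℂ).im 2
    simp only [Pfun, Matrix.cons_val_two, Matrix.tail_cons, Matrix.head_cons]
    exact continuous_const.add cont_aa
  · show Continuous fun p : CC2 => Pfun (p.1 : ℂ) (p.2 : ℂ).re (p.2 : ℂ).im 3
    simp only [Pfun, Matrix.cons_val_three, Matrix.tail_cons, Matrix.head_cons]
    exact (continuous_const.add cont_aa).add cont_bb
  · show Continuous fun p : CC2 => Pfun (p.1 : ℂ) (p.2 : ℂ).re (p.2 : ℂ).im 4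
    simp only [Pfun, Matrix.cons_val_four, Matrix.tail_cons, Matrix.head_cons]
    exact ((continuous_const.add cont_aa).add cont_bb).add (hc1.div_const 2)

end Continuity

end PentTorus

/-- For the pentagonal linkage `l = (1, 1, 1, 1/2, 2)`, the moduli space
`M(l)`, realized as the slice
`S(l) = { P : Fin 5 → ℂ | P 0 = 0, P 1 = (1, 0), dist (P i) (P (i+1)) = l i for all i }`
(the plane `ℝ²` modeled as `ℂ`, indices cyclic mod 5), is homeomorphic to the 2-torus
`Circle × Circle`. -/
theorem pentagon_torus_moduli_space_homeomorphic_torus :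
    Nonempty
      ({P : Fin 5 → ℂ // P 0 = 0 ∧ P 1 = 1 ∧
          ∀ i, dist (P i) (P (i + 1)) = ![1, 1, 1, 1/2, 2] i} ≃ₜ
        (Circle × Circle)) := by
  classical
  set T := {P : Fin 5 → ℂ // P 0 = 0 ∧ P 1 = 1 ∧
      ∀ i, dist (P i) (P (i + 1)) = ![1, 1, 1, 1/2, 2] i} with hT
  let Gm : Circle × Circle → T := fun p =>
    ⟨PentTorus.Pfun (p.1 : ℂ) (p.2 : ℂ).re (p.2 : ℂ).im,
      PentTorus.Pfun_mem (Circle.abs_coe p.1)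
        (PentTorus.re_sq_add_im_sq (Circle.abs_coe p.2))⟩
  have hinj : Function.Injective Gm := by
    intro p q h
    have h' := congrArg Subtype.val h
    obtain ⟨h1, h2, h3⟩ := PentTorus.pent_inj (Circle.abs_coe p.1) (Circle.abs_coe q.1)
      (PentTorus.re_sq_add_im_sq (Circle.abs_coe p.2))
      (PentTorus.re_sq_add_im_sq (Circle.abs_coe q.2)) h'
    have e1 : p.1 = q.1 := Subtype.ext h1
    have e2 : p.2 = q.2 := Subtype.ext (Complex.ext h2 h3)
    exact Prod.ext e1 e2
  have hsurj : Function.Surjective Gm := by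
    rintro ⟨P, h0, h1, hd⟩
    obtain ⟨u, x, y, hu, hxy, hP⟩ := PentTorus.pent_surj h0 h1 hd
    have hvabs : Complex.abs ((x:ℂ) + (y:ℂ)*Complex.I) = 1 := by
      have hns : Complex.normSq ((x:ℂ) + (y:ℂ)*Complex.I) = 1 := by
        rw [Complex.normSq_apply]
        simp
        nlinarith [hxy]
      have h2 : Complex.abs ((x:ℂ) + (y:ℂ)*Complex.I) ^ 2 = 1 := by
        rw [Complex.sq_abs, hns]
      nlinarith [Complex.abs.nonneg ((x:ℂ) + (y:ℂ)*Complex.I)]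
    refine ⟨(⟨u, ?_⟩, ⟨(x:ℂ) + (y:ℂ)*Complex.I, ?_⟩), ?_⟩
    · show u ∈ Metric.sphere 0 1
      simp [Complex.norm_eq_abs, hu]
    · show ((x:ℂ) + (y:ℂ)*Complex.I) ∈ Metric.sphere 0 1
      simp only [Metric.mem_sphere, dist_zero_right, Complex.norm_eq_abs]
      exact hvabs
    · apply Subtype.ext
      show PentTorus.Pfun u (((x:ℂ) + (y:ℂ)*Complex.I).re) (((x:ℂ) + (y:ℂ)*Complex.I).im) = P
      have hre : ((x:ℂ) + (y:ℂ)*Complex.I).re = x := by simp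
      have him : ((x:ℂ) + (y:ℂ)*Complex.I).im = y := by simp
      rw [hre, him]
      exact hP
  let e : (Circle × Circle) ≃ T := Equiv.ofBijective Gm ⟨hinj, hsurj⟩
  have hcont : Continuous e := by
    apply Continuous.subtype_mk
    exact PentTorus.cont_G
  exact ⟨(hcont.homeoOfEquivCompactToT2).symm⟩
end
end

section
/- Let n ≥ 1 and let Π_n ⊆ (Fin n → ℝ) be the convex hull of the set V_n = { x | x i = σ(i) + 1 as a real number, for some permutation σ of Fin n } of all points obtained by permuting the coordinates of (1, 2, …, n). Then the set of extreme points of Π_n equals V_n, and V_n has cardinality n!. -/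
/-- The vertex set of the permutohedron `Π_n`: all points of `ℝⁿ` (modeled as
`Fin n → ℝ`) obtained by permuting the coordinates of the point `(1, 2, …, n)`. -/
def permutohedronVertices (n : ℕ) : Set (Fin n → ℝ) :=
  {x | ∃ σ : Equiv.Perm (Fin n), x = fun i => ((σ i : ℕ) : ℝ) + 1}

/-- The sublevel set of `x ↦ ∑ xᵢ²` is convex. -/
lemma sq_sublevel_convex (n : ℕ) (C : ℝ) :
    Convex ℝ {z : Fin n → ℝ | ∑ i, (z i) ^ 2 ≤ C} := by
  intro x hx y hy a b ha hb hab
  simp only [Set.mem_setOf_eq] at *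
  have key : ∀ i, ((a • x + b • y) i) ^ 2 ≤ a * (x i) ^ 2 + b * (y i) ^ 2 := by
    intro i
    simp only [Pi.add_apply, Pi.smul_apply, smul_eq_mul]
    nlinarith [sq_nonneg (x i - y i), mul_nonneg ha hb]
  calc ∑ i, ((a • x + b • y) i) ^ 2 ≤ ∑ i, (a * (x i) ^ 2 + b * (y i) ^ 2) :=
        Finset.sum_le_sum fun i _ => key i
    _ = a * ∑ i, (x i) ^ 2 + b * ∑ i, (y i) ^ 2 := by
        rw [Finset.sum_add_distrib, Finset.mul_sum, Finset.mul_sum]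
    _ ≤ a * C + b * C := by gcongr
    _ = C := by rw [← add_mul, hab, one_mul]

/-- For `n ≥ 1`, the set of extreme points of the permutohedron
`Π_n = convexHull ℝ V_n` (where `V_n` is the set of coordinate permutations of
`(1, 2, …, n)`) is exactly `V_n`, and `V_n` has cardinality `n!`. -/
theorem permutohedron_extremePoints_eq_vertices_and_card
    (n : ℕ) (hn : 1 ≤ n) :
    Set.extremePoints ℝ (convexHull ℝ (permutohedronVertices n)) =
      permutohedronVertices n ∧
    (permutohedronVertices n).ncard = n.factorial := by
  set C : ℝ := ∑ i : Fin n, ((i : ℕ) + 1 : ℝ) ^ 2 with hC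
  have hfV : ∀ v ∈ permutohedronVertices n, ∑ i, (v i) ^ 2 = C := by
    rintro v ⟨σ, rfl⟩
    simpa using (Equiv.sum_comp σ (fun j : Fin n => ((j : ℕ) + 1 : ℝ) ^ 2))
  have hhull : ∀ z ∈ convexHull ℝ (permutohedronVertices n), ∑ i, (z i) ^ 2 ≤ C :=
    fun z hz => convexHull_min (fun v hv => le_of_eq (hfV v hv)) (sq_sublevel_convex n C) hz
  constructor
  · apply Set.Subset.antisymm
    · exact extremePoints_convexHull_subset
    · intro v hv
      rw [mem_extremePoints]
      refine ⟨subset_convexHull ℝ _ hv, ?_⟩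
      intro x hx y hy hseg
      obtain ⟨a, b, ha, hb, hab, hv'⟩ := hseg
      have hfv : ∑ i, (v i) ^ 2 = C := hfV v hv
      have hfx := hhull x hx
      have hfy := hhull y hy
      have key : ∀ i, ((a • x + b • y) i) ^ 2 ≤ a * (x i) ^ 2 + b * (y i) ^ 2 := by
        intro i
        simp only [Pi.add_apply, Pi.smul_apply, smul_eq_mul]
        nlinarith [sq_nonneg (x i - y i), mul_pos ha hb]
      have hsum : ∑ i, (v i) ^ 2 ≤ a * ∑ i, (x i) ^ 2 + b * ∑ i, (y i) ^ 2 := by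
        rw [← hv', Finset.mul_sum, Finset.mul_sum, ← Finset.sum_add_distrib]
        exact Finset.sum_le_sum fun i _ => key i
      have heq : a * ∑ i, (x i) ^ 2 + b * ∑ i, (y i) ^ 2 = C := by
        have h1 : a * ∑ i, (x i) ^ 2 + b * ∑ i, (y i) ^ 2 ≤ a * C + b * C := by
          gcongr
        have h2 : a * C + b * C = C := by rw [← add_mul, hab, one_mul]
        linarith [hsum, hfv.ge]
      have hxy : x = y := by
        funext i
        by_contra hne
        have hne' : x i - y i ≠ 0 := sub_ne_zero.mpr hne
        have hlt : ((a • x + b • y) i) ^ 2 < a * (x i) ^ 2 + b * (y i) ^ 2 := by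
          simp only [Pi.add_apply, Pi.smul_apply, smul_eq_mul]
          have h3 : (x i - y i) ^ 2 > 0 := by positivity
          nlinarith [mul_pos ha hb]
        have hstrict : ∑ i, ((a • x + b • y) i) ^ 2 <
            ∑ i, (a * (x i) ^ 2 + b * (y i) ^ 2) :=
          Finset.sum_lt_sum (fun i _ => key i) ⟨i, Finset.mem_univ i, hlt⟩
        rw [hv'] at hstrict
        rw [Finset.sum_add_distrib, ← Finset.mul_sum, ← Finset.mul_sum] at hstrict
        rw [heq, hfv] at hstrict
        exact lt_irrefl _ hstrict
      subst hxy
      have hvx : v = x := by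
        rw [← hv']
        funext i
        simp only [Pi.add_apply, Pi.smul_apply, smul_eq_mul]
        linear_combination (x i) * hab
      exact ⟨hvx.symm, hvx.symm⟩
  · have hrange : permutohedronVertices n =
        Set.range (fun σ : Equiv.Perm (Fin n) => fun i => ((σ i : ℕ) : ℝ) + 1) := by
      ext x
      constructor
      · rintro ⟨σ, rfl⟩; exact ⟨σ, rfl⟩
      · rintro ⟨σ, rfl⟩; exact ⟨σ, rfl⟩
    rw [hrange, ← Nat.card_coe_set_eq,
      Nat.card_range_of_injective (f := fun σ : Equiv.Perm (Fin n) =>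
        fun i => ((σ i : ℕ) : ℝ) + 1) ?_]
    · simp [Nat.card_eq_fintype_card, Fintype.card_perm, Fintype.card_fin]
    · intro σ τ h
      ext i
      have h1 := congrFun h i
      simp only at h1
      have h2 : ((σ i : ℕ) : ℝ) = ((τ i : ℕ) : ℝ) := by linarith
      exact_mod_cast h2
end

section
/- Let n ≥ 2, let Π_n ⊆ (Fin n → ℝ) be the permutohedron (convex hull of the coordinate permutations V_n of (1, 2, …, n)), and let S be a nonempty proper subset of Fin n with |S| = s. Consider the linear functional f(x) = ∑_{i ∈ S} x i. Then the maximum of f on Π_n equals ∑_{k = n−s+1}^{n} k, and the exposed face F_S = { x ∈ Π_n | f(x) = max } equals the convex hull of those points of V_n whose coordinates indexed by S take exactly the values {n−s+1, …, n}. In particular F_S is a nonempty proper exposed face of Π_n. -/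
/-- The permutohedron `Π_n`, the convex hull of the coordinate permutations of
`(1, 2, …, n)`. -/
def permutohedron (n : ℕ) : Set (Fin n → ℝ) :=
  convexHull ℝ (permutohedronVertices n)


/-- Auxiliary: sum over a finset of naturals contained in `[1, n]` of cardinality `s`
is strictly less than the sum of the top `s` values unless it equals `Icc (n-s+1) n`. -/
lemma perm_aux_sum_lt (n s : ℕ) (hs1 : 1 ≤ s) (hsn : s < n) (T : Finset ℕ)
    (hcard : T.card = s) (hTb : ∀ j ∈ T, 1 ≤ j ∧ j ≤ n)
    (hne : T ≠ Finset.Icc (n - s + 1) n) :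
    ∑ j ∈ T, j < ∑ k ∈ Finset.Icc (n - s + 1) n, k := by
  set K := Finset.Icc (n - s + 1) n with hKdef
  have hK : K.card = s := by rw [hKdef, Nat.card_Icc]; omega
  have hTK : ¬ T ⊆ K := fun h => hne (Finset.eq_of_subset_of_card_le h (by omega))
  have hm1 : 1 ≤ (T \ K).card :=
    Finset.card_pos.mpr (Finset.sdiff_nonempty.mpr hTK)
  have hm2 : (K \ T).card = (T \ K).card := Finset.card_sdiff_comm (by omega)
  have b1 : ∑ j ∈ T \ K, j ≤ (T \ K).card * (n - s) := by
    have := Finset.sum_le_card_nsmul (T \ K) id (n - s) ?_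
    · simpa using this
    · intro j hj
      have h1 := hTb j (Finset.mem_sdiff.mp hj).1
      have h2 := (Finset.mem_sdiff.mp hj).2
      simp only [hKdef, Finset.mem_Icc] at h2
      simp only [id]
      omega
  have b2 : (K \ T).card * (n - s + 1) ≤ ∑ k ∈ K \ T, k := by
    have := Finset.card_nsmul_le_sum (K \ T) id (n - s + 1) ?_
    · simpa using this
    · intro k hk
      have h1 := (Finset.mem_sdiff.mp hk).1
      simp only [hKdef, Finset.mem_Icc] at h1
      simpa using h1.1
  have key : ∑ j ∈ T \ K, j < ∑ k ∈ K \ T, k := by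
    calc ∑ j ∈ T \ K, j ≤ (T \ K).card * (n - s) := b1
      _ < (T \ K).card * (n - s + 1) := by
          nlinarith [hm1]
      _ = (K \ T).card * (n - s + 1) := by rw [hm2]
      _ ≤ ∑ k ∈ K \ T, k := b2
  have e1 : ∑ j ∈ T ∩ K, j + ∑ j ∈ T \ K, j = ∑ j ∈ T, j :=
    Finset.sum_inter_add_sum_sdiff T K id
  have e2 : ∑ j ∈ K ∩ T, j + ∑ j ∈ K \ T, j = ∑ j ∈ K, j :=
    Finset.sum_inter_add_sum_sdiff K T id
  rw [Finset.inter_comm] at e2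
  omega

/-- Auxiliary: the exposed face of a convex hull at the maximum value of a linear
functional is the convex hull of the maximizing points. -/
lemma perm_aux_face_hull {E : Type*} [AddCommGroup E] [Module ℝ E] (V : Set E)
    (f : E →ₗ[ℝ] ℝ) (M : ℝ) (hV : ∀ v ∈ V, f v ≤ M) :
    {x ∈ convexHull ℝ V | f x = M} = convexHull ℝ {v ∈ V | f v = M} := by
  apply Set.Subset.antisymm
  · rintro x ⟨hx, hfx⟩
    rw [convexHull_eq] at hx
    obtain ⟨ι, t, w, z, hw₀, hw₁, hz, rfl⟩ := hx
    have hle : ∀ i ∈ t, w i * f (z i) ≤ w i * M := fun i hi =>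
      mul_le_mul_of_nonneg_left (hV _ (hz i hi)) (hw₀ i hi)
    have hfc : f (t.centerMass w z) = ∑ i ∈ t, w i * f (z i) := by
      rw [Finset.centerMass_eq_of_sum_1 _ _ hw₁, map_sum]
      simp [LinearMap.map_smul, smul_eq_mul]
    have hmax : ∀ i ∈ t, w i ≠ 0 → f (z i) = M := by
      intro i hi hwi
      by_contra hne
      have hlt : w i * f (z i) < w i * M :=
        mul_lt_mul_of_pos_left (lt_of_le_of_ne (hV _ (hz i hi)) hne)
          (lt_of_le_of_ne (hw₀ i hi) (Ne.symm hwi))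
      have : ∑ i ∈ t, w i * f (z i) < ∑ i ∈ t, w i * M :=
        Finset.sum_lt_sum hle ⟨i, hi, hlt⟩
      rw [← Finset.sum_mul, hw₁, one_mul] at this
      rw [hfc] at hfx
      linarith
    rw [← Finset.centerMass_filter_ne_zero (t := t) (w := w) z]
    apply Finset.centerMass_mem_convexHull
    · intro i hi; exact hw₀ i (Finset.mem_filter.mp hi).1
    · rw [Finset.sum_filter_ne_zero]; rw [hw₁]; exact one_pos
    · intro i hi
      obtain ⟨hit, hwi⟩ := Finset.mem_filter.mp hi
      exact ⟨hz i hit, hmax i hit hwi⟩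
  · intro x hx
    constructor
    · exact convexHull_mono (Set.sep_subset _ _) hx
    · have hsub : convexHull ℝ {v ∈ V | f v = M} ⊆ {w | f w = M} :=
        convexHull_min (fun v hv => hv.2) (convex_hyperplane f.isLinear M)
      exact hsub hx
/-- Let `n ≥ 2` and let `S` be a nonempty proper subset of `Fin n` with
`s = |S|`.  For the linear functional `f(x) = ∑_{i ∈ S} x i`:
* the maximum of `f` on `Π_n` equals `∑_{k = n−s+1}^{n} k`;
* the exposed face `F_S = { x ∈ Π_n | f x = max }` equals the convex hull of those
  vertices of `Π_n` whose coordinates indexed by `S` take exactly the values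
  `{n−s+1, …, n}`;
* `F_S` is a nonempty proper exposed face of `Π_n`. -/
theorem permutohedron_facet_description
    (n : ℕ) (hn : 2 ≤ n) (S : Finset (Fin n)) (hS : S.Nonempty)
    (hSu : S ≠ Finset.univ) :
    IsGreatest ((fun x => ∑ i ∈ S, x i) '' permutohedron n)
      (∑ k ∈ Finset.Icc (n - S.card + 1) n, (k : ℝ)) ∧
    {x ∈ permutohedron n |
        ∑ i ∈ S, x i = ∑ k ∈ Finset.Icc (n - S.card + 1) n, (k : ℝ)} =
      convexHull ℝ {x ∈ permutohedronVertices n |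
        x '' ↑S = (fun k : ℕ => (k : ℝ)) '' ↑(Finset.Icc (n - S.card + 1) n)} ∧
    IsExposed ℝ (permutohedron n)
      {x ∈ permutohedron n |
        ∑ i ∈ S, x i = ∑ k ∈ Finset.Icc (n - S.card + 1) n, (k : ℝ)} ∧
    {x ∈ permutohedron n |
        ∑ i ∈ S, x i = ∑ k ∈ Finset.Icc (n - S.card + 1) n, (k : ℝ)}.Nonempty ∧
    {x ∈ permutohedron n |
        ∑ i ∈ S, x i = ∑ k ∈ Finset.Icc (n - S.card + 1) n, (k : ℝ)} ≠
      permutohedron n := by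
  classical
  -- basic cardinality facts
  have hs1 : 1 ≤ S.card := hS.card_pos
  have hsn : S.card < n := by
    have := Finset.card_lt_card (Finset.ssubset_univ_iff.mpr hSu)
    simpa using this
  set s := S.card with hs
  set K : Finset ℕ := Finset.Icc (n - s + 1) n with hKdef
  set natM : ℕ := ∑ k ∈ K, k with hnatM
  -- the linear functional
  set f : (Fin n → ℝ) →ₗ[ℝ] ℝ := ∑ i ∈ S, LinearMap.proj i with hfdef
  have hf : ∀ x : Fin n → ℝ, f x = ∑ i ∈ S, x i := by
    intro x; simp [hfdef]
  -- vertices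
  set vert : Equiv.Perm (Fin n) → (Fin n → ℝ) :=
    fun σ => fun i => ((σ i : ℕ) : ℝ) + 1 with hvert
  set T : Equiv.Perm (Fin n) → Finset ℕ :=
    fun σ => S.image (fun i => (σ i : ℕ) + 1) with hTdef
  have hTcard : ∀ σ, (T σ).card = s := by
    intro σ
    rw [hTdef]
    rw [Finset.card_image_of_injective _ (fun a b hab => σ.injective (Fin.val_injective (by omega)))]
  have hTsum : ∀ σ, ∑ j ∈ T σ, j = ∑ i ∈ S, ((σ i : ℕ) + 1) := by
    intro σ
    rw [hTdef]
    exact Finset.sum_image (fun a _ b _ hab => σ.injective (Fin.val_injective (by omega)))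
  have hTb : ∀ σ, ∀ j ∈ T σ, 1 ≤ j ∧ j ≤ n := by
    intro σ j hj
    rw [hTdef, Finset.mem_image] at hj
    obtain ⟨i, _, rfl⟩ := hj
    have := (σ i).isLt
    omega
  have hKcard : K.card = s := by rw [hKdef, Nat.card_Icc]; omega
  -- value of f on vertices
  have hvf : ∀ σ, f (vert σ) = ((∑ i ∈ S, ((σ i : ℕ) + 1) : ℕ) : ℝ) := by
    intro σ
    rw [hf, hvert]
    push_cast
    rfl
  have hMcast : ∑ k ∈ Finset.Icc (n - s + 1) n, (k : ℝ) = (natM : ℝ) := by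
    rw [hnatM, hKdef]; push_cast; rfl
  -- vertex sum bound and equality characterization
  have hub_nat : ∀ σ, ∑ j ∈ T σ, j ≤ natM := by
    intro σ
    by_cases h : T σ = K
    · rw [h]
    · exact le_of_lt (perm_aux_sum_lt n s hs1 hsn (T σ) (hTcard σ) (hTb σ) h)
  have heq_iff : ∀ σ, (∑ j ∈ T σ, j = natM ↔ T σ = K) := by
    intro σ
    constructor
    · intro h
      by_contra hne
      exact absurd h (ne_of_lt (perm_aux_sum_lt n s hs1 hsn (T σ) (hTcard σ) (hTb σ) hne))
    · intro h; rw [h]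
  -- characterization via the condition C
  have hC : ∀ σ : Equiv.Perm (Fin n), (T σ = K ↔ ∀ i ∈ S, n - s ≤ (σ i : ℕ)) := by
    intro σ
    constructor
    · intro h i hi
      have : (σ i : ℕ) + 1 ∈ T σ := by
        rw [hTdef]; exact Finset.mem_image_of_mem _ hi
      rw [h, hKdef, Finset.mem_Icc] at this
      omega
    · intro h
      apply Finset.eq_of_subset_of_card_le
      · intro j hj
        rw [hTdef, Finset.mem_image] at hj
        obtain ⟨i, hi, rfl⟩ := hj
        have h1 := h i hi
        have h2 := (σ i).isLt
        rw [hKdef, Finset.mem_Icc]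
        omega
      · rw [hKcard, hTcard]
  -- image condition characterization
  have himg : ∀ σ : Equiv.Perm (Fin n),
      ((vert σ) '' ↑S = (fun k : ℕ => (k : ℝ)) '' ↑K ↔ T σ = K) := by
    intro σ
    have h1 : (vert σ) '' ↑S = (fun k : ℕ => (k : ℝ)) '' ↑(T σ) := by
      rw [hTdef, Finset.coe_image, ← Set.image_comp]
      apply Set.image_congr
      intro i _
      simp [hvert, Function.comp]
    rw [h1]
    constructor
    · intro h
      have hinj : Function.Injective (fun k : ℕ => (k : ℝ)) := Nat.cast_injective
      have := Set.image_injective.mpr hinj h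
      exact Finset.coe_inj.mp this
    · intro h; rw [h]
  -- a maximizing vertex
  set Kfin : Finset (Fin n) := Finset.Icc ⟨n - s, by omega⟩ ⟨n - 1, by omega⟩ with hKfindef
  have hKfin_mem : ∀ j : Fin n, j ∈ Kfin ↔ n - s ≤ (j : ℕ) := by
    intro j
    have := j.isLt
    rw [hKfindef, Finset.mem_Icc, Fin.le_def, Fin.le_def]
    simp only []
    omega
  have hKfincard : Kfin.card = s := by
    rw [hKfindef, Fin.card_Icc]
    simp only []
    omega
  have hcards : S.card = Kfin.card := by rw [hKfincard]
  set e := Finset.equivOfCardEq hcards with hedef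
  set σ₀ : Equiv.Perm (Fin n) := Equiv.extendSubtype e with hσ₀def
  have hσ₀ : ∀ i ∈ S, n - s ≤ (σ₀ i : ℕ) := by
    intro i hi
    have := Equiv.extendSubtype_mem e i hi
    exact (hKfin_mem _).mp this
  have hσ₀T : T σ₀ = K := (hC σ₀).mpr hσ₀
  -- upper bound on the permutohedron
  have hub : ∀ x ∈ permutohedron n, f x ≤ (natM : ℝ) := by
    intro x hx
    have hsub : permutohedron n ⊆ {y | f y ≤ (natM : ℝ)} := by
      apply convexHull_min _ (convex_halfSpace_le f.isLinear _)
      rintro y ⟨σ, rfl⟩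
      show f (vert σ) ≤ (natM : ℝ)
      rw [hvf]
      exact_mod_cast (hTsum σ) ▸ hub_nat σ
    exact hsub hx
  have hvmem : ∀ σ, vert σ ∈ permutohedron n := by
    intro σ
    exact subset_convexHull ℝ _ ⟨σ, rfl⟩
  have hv₀val : f (vert σ₀) = (natM : ℝ) := by
    rw [hvf]
    exact_mod_cast (hTsum σ₀) ▸ (heq_iff σ₀).mpr hσ₀T
  -- vertex-level face description
  have hVface : {x ∈ permutohedronVertices n |
      x '' ↑S = (fun k : ℕ => (k : ℝ)) '' ↑K} =
      {v ∈ permutohedronVertices n | f v = (natM : ℝ)} := by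
    ext x
    simp only [Set.mem_setOf_eq, and_congr_right_iff]
    rintro ⟨σ, rfl⟩
    show (vert σ) '' ↑S = _ ↔ f (vert σ) = _
    rw [himg σ, hvf σ, ← hTsum σ, Nat.cast_inj]
    exact (heq_iff σ).symm
  -- face description
  have hface : {x ∈ permutohedron n | ∑ i ∈ S, x i = ∑ k ∈ Finset.Icc (n - s + 1) n, (k : ℝ)} =
      convexHull ℝ {x ∈ permutohedronVertices n |
        x '' ↑S = (fun k : ℕ => (k : ℝ)) '' ↑K} := by
    rw [hVface, hMcast]
    have := perm_aux_face_hull (permutohedronVertices n) f (natM : ℝ)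
      (fun v hv => hub v (subset_convexHull ℝ _ hv))
    rw [← this]
    unfold permutohedron
    ext x
    simp only [Set.mem_setOf_eq, hf]
  -- assemble
  rw [hMcast]
  have hv₀sum : ∑ i ∈ S, vert σ₀ i = (natM : ℝ) := by
    have := hv₀val; rwa [hf] at this
  have hmemface : vert σ₀ ∈ {x ∈ permutohedron n | ∑ i ∈ S, x i = (natM : ℝ)} :=
    ⟨hvmem σ₀, hv₀sum⟩
  refine ⟨⟨⟨vert σ₀, hvmem σ₀, hv₀sum⟩, ?_⟩, ?_, ?_, ?_, ?_⟩
  · rintro r ⟨x, hx, rfl⟩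
    have := hub x hx; rwa [hf] at this
  · rw [← hMcast]; exact hface
  · intro _
    refine ⟨LinearMap.toContinuousLinearMap f, ?_⟩
    ext x
    simp only [Set.mem_setOf_eq, LinearMap.coe_toContinuousLinearMap', hf]
    constructor
    · rintro ⟨hx, hfx⟩
      refine ⟨hx, fun y hy => ?_⟩
      have h1 := hub y hy; rw [hf] at h1
      rw [hfx]; exact h1
    · rintro ⟨hx, hmax⟩
      refine ⟨hx, le_antisymm ?_ ?_⟩
      · have h1 := hub x hx; rwa [hf] at h1
      · have h2 := hmax _ (hvmem σ₀)
        rw [← hv₀sum]; exact h2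
  · exact ⟨vert σ₀, hmemface⟩
  · intro h
    -- a non-maximizing vertex
    obtain ⟨i₀, hi₀⟩ := hS
    set σ' : Equiv.Perm (Fin n) := Equiv.swap (⟨0, by omega⟩ : Fin n) i₀ with hσ'def
    have hσ'i₀ : σ' i₀ = ⟨0, by omega⟩ := Equiv.swap_apply_right _ _
    have hbad : ¬ (∀ i ∈ S, n - s ≤ (σ' i : ℕ)) := by
      intro hgood
      have := hgood i₀ hi₀
      rw [hσ'i₀] at this
      simp only [] at this
      omega
    have hx' : vert σ' ∈ permutohedron n := hvmem σ'
    rw [← h] at hx'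
    have : f (vert σ') = (natM : ℝ) := by rw [hf]; exact hx'.2
    rw [hvf] at this
    have hnat : ∑ i ∈ S, ((σ' i : ℕ) + 1) = natM := by exact_mod_cast this
    rw [← hTsum] at hnat
    exact hbad ((hC σ').mp ((heq_iff σ').mp hnat))
end
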